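/- arXiv:2207.08308 — 3 statements merged into one kernel-verified Lean document; each statement's English description precedes it below -/
import Mathlib

section
/- Let m ≥ 3 and m̄ = ⌈m/2⌉. For r ∈ {1,…,m}, let N(r) denote the number of sequences (β_0, β_1, …, β_{m̄}) of integers with β_0 = r, 1 ≤ β_i ≤ m for all i, and |β_i − β_{i−1}| = 1 for i = 1,…,m̄. Then max_{1≤r≤m} N(r) = 2^{m̄} − 2 if m is odd, and max_{1≤r≤m} N(r) = 2^{m̄} − 1 if m is even. -/
open MeasureTheory Filter Topology

noncomputable section

/-- Cauchy transform of a finite positive Borel measure on `ℝ`. -/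
def cauchyT (s : Measure ℝ) (z : ℂ) : ℂ := ∫ x, (z - (x : ℂ))⁻¹ ∂s

/-- Forward Nikishin functions: `nikAux σ g j = ŝ_{j, j+g}`. -/
def nikAux (σ : ℕ → Measure ℝ) : ℕ → ℕ → ℂ → ℂ
  | 0, j => cauchyT (σ j)
  | g + 1, j => fun z => ∫ x, nikAux σ g (j + 1) (x : ℂ) / (z - (x : ℂ)) ∂(σ j)

/-- Reversed Nikishin functions: `nikRevAux σ g k = ŝ_{k, k-g}`. -/
def nikRevAux (σ : ℕ → Measure ℝ) : ℕ → ℕ → ℂ → ℂ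
  | 0, k => cauchyT (σ k)
  | g + 1, k => fun z => ∫ x, nikRevAux σ g (k - 1) (x : ℂ) / (z - (x : ℂ)) ∂(σ k)

/-- `sHat σ j k = ŝ_{j,k}` (forward Nikishin function if `j ≤ k`, reversed one if `j > k`). -/
def sHat (σ : ℕ → Measure ℝ) (j k : ℕ) : ℂ → ℂ :=
  if j ≤ k then nikAux σ (k - j) j else nikRevAux σ (j - k) j

/-- The branch of `√((z-a)(z-b))` holomorphic on `ℂ ∖ [a,b]` and positive for `z > b`. -/
def sqrtBr (a b : ℝ) (z : ℂ) : ℂ :=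
  Complex.exp ((Complex.log (z - (a : ℂ)) + Complex.log (z - (b : ℂ))) / 2)

/-- Radon–Nikodym derivative w.r.t. Lebesgue measure, as a real valued function. -/
def rnd (μ : Measure ℝ) (x : ℝ) : ℝ := (μ.rnDeriv volume x).toReal

/-- Szegő's condition on `[a,b]`. -/
def SzegoCond (μ : Measure ℝ) (a b : ℝ) : Prop :=
  IntegrableOn (fun x => Real.log (rnd μ x) / Real.sqrt ((b - x) * (x - a)))
    (Set.Ioo a b) volume

/-- The Szegő function of a measure on `[a,b]`. -/
def szegoFn (μ : Measure ℝ) (a b : ℝ) (z : ℂ) : ℂ :=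
  Complex.exp ((sqrtBr a b z / (2 * (Real.pi : ℂ))) *
    ∫ x in Set.Ioo a b,
      (Real.log (Real.sqrt ((b - x) * (x - a)) * rnd μ x) : ℂ) /
        (((x : ℂ) - z) * (Real.sqrt ((b - x) * (x - a)) : ℂ)))

/-- The value of the Szegő function at `∞`. -/
def szegoInf (μ : Measure ℝ) (a b : ℝ) : ℝ :=
  Real.exp (-(1 / (2 * Real.pi)) *
    ∫ x in Set.Ioo a b,
      Real.log (Real.sqrt ((b - x) * (x - a)) * rnd μ x) / Real.sqrt ((b - x) * (x - a)))

/-- Logarithmic potential `V^μ(x) = ∫ log(1/|x-t|) dμ(t)`. -/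
def logPotential (μ : Measure ℝ) (x : ℝ) : ℝ := ∫ t, Real.log (1 / |x - t|) ∂μ

/-- `Φ(z) = exp ∫ Log(z - t) dμ(t)`. -/
def PhiFn (μ : Measure ℝ) (z : ℂ) : ℂ := Complex.exp (∫ t, Complex.log (z - (t : ℂ)) ∂μ)

/-- Support of a Borel measure on `ℝ`. -/
def msupport (μ : Measure ℝ) : Set ℝ := {x | ∀ U : Set ℝ, IsOpen U → x ∈ U → 0 < μ U}

/-- Partial sums `P_j = p_1 + ⋯ + p_j`. -/
def Psum (p : ℕ → ℝ) (j : ℕ) : ℝ := ∑ i ∈ Finset.Icc 1 j, p i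

/-- The total potential appearing in the vector equilibrium problem. -/
def eqWt (p : ℕ → ℝ) (lam : ℕ → Measure ℝ) (j : ℕ) (x : ℝ) : ℝ :=
  logPotential (lam j) x -
    (1 / 2) * ((Psum p (j - 1) / Psum p j) * logPotential (lam (j - 1)) x +
      (Psum p (j + 1) / Psum p j) * logPotential (lam (j + 1)) x)

/-- The vector equilibrium problem. -/
def IsVectEquil (m : ℕ) (a b : ℕ → ℝ) (p : ℕ → ℝ) (lam : ℕ → Measure ℝ) (ω : ℕ → ℝ) : Prop :=
  lam 0 = 0 ∧ lam (m + 1) = 0 ∧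
  ∀ j, 1 ≤ j → j ≤ m →
    IsProbabilityMeasure (lam j) ∧
    msupport (lam j) ⊆ Set.Icc (a j) (b j) ∧
    (∀ x ∈ msupport (lam j), eqWt p lam j x = ω j) ∧
    (∀ x ∈ Set.Icc (a j) (b j), ω j ≤ eqWt p lam j x)

/-- `Δ_j` as a subset of `ℂ` (with the convention `Δ_j = ∅` for `j ∉ {1,…,m}`). -/
def cSeg (m : ℕ) (a b : ℕ → ℝ) (j : ℕ) : Set ℂ :=
  if 1 ≤ j ∧ j ≤ m then {w : ℂ | w.im = 0 ∧ a j ≤ w.re ∧ w.re ≤ b j} else ∅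

/-- `Δ_j` as a subset of `ℝ` (with the convention `Δ_j = ∅` for `j ∉ {1,…,m}`). -/
def rSeg (m : ℕ) (a b : ℕ → ℝ) (j : ℕ) : Set ℝ :=
  if 1 ≤ j ∧ j ≤ m then Set.Icc (a j) (b j) else ∅

/-- `|n| = n_1 + ⋯ + n_m`. -/
def nsum (m : ℕ) (n : ℕ → ℕ) : ℕ := ∑ i ∈ Finset.Icc 1 m, n i

/-- `η_{n,j} = n_1 + ⋯ + n_j`. -/
def etaIdx (n : ℕ → ℕ) (j : ℕ) : ℕ := ∑ i ∈ Finset.Icc 1 j, n i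

/-- The linear forms `A_{n,j} = (-1)^j a_{n,j} + Σ_{k=j+1}^m (-1)^k a_{n,k} ŝ_{j+1,k}`. -/
def formA (m : ℕ) (σ : ℕ → Measure ℝ) (A : ℕ → Polynomial ℝ) (j : ℕ) (z : ℂ) : ℂ :=
  (-1 : ℂ) ^ j * Polynomial.aeval z (A j) +
    ∑ k ∈ Finset.Icc (j + 1) m, (-1 : ℂ) ^ k * Polynomial.aeval z (A k) * sHat σ (j + 1) k z

/-- `f(z) = O(z^{-N})` as `z → ∞`, i.e. `z^N f(z)` is bounded near `∞`. -/
def BoundedWithOrder (f : ℂ → ℂ) (N : ℕ) : Prop :=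
  ∃ C R : ℝ, ∀ z : ℂ, R ≤ ‖z‖ → ‖z ^ N * f z‖ ≤ C

/-- Multi-level Hermite–Padé polynomials associated with the multi-index `n`. -/
def IsMLHP (m : ℕ) (σ : ℕ → Measure ℝ) (n : ℕ → ℕ) (A : ℕ → Polynomial ℝ) : Prop :=
  0 < nsum m n ∧
  (∃ j, j ≤ m ∧ A j ≠ 0) ∧
  (∀ j, j < m → (A j).natDegree < nsum m n) ∧
  (A m).Monic ∧ (A m).natDegree ≤ nsum m n ∧
  ∀ j, j < m → BoundedWithOrder (formA m σ A j) (n (j + 1) + 1)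

/-- `Q_{n,j}`: the monic polynomial collecting the zeros of `A_{n,j}` in `ℂ ∖ Δ_{j+1}`;
they are simple and lie in the interior of `Δ_j`. -/
def IsQpoly (m : ℕ) (a b : ℕ → ℝ) (σ : ℕ → Measure ℝ) (n : ℕ → ℕ)
    (A : ℕ → Polynomial ℝ) (j : ℕ) (Q : Polynomial ℝ) : Prop :=
  Q.Monic ∧ Q.natDegree = etaIdx n j ∧ Squarefree Q ∧
  (∀ z : ℂ, Polynomial.aeval z Q = 0 →
    z.im = 0 ∧ a j < z.re ∧ z.re < b j ∧ formA m σ A j z = 0) ∧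
  (∀ z : ℂ, z ∉ cSeg m a b (j + 1) → formA m σ A j z = 0 → Polynomial.aeval z Q = 0)

/-- `H_{n,j} = Q_{n,j+1} A_{n,j} / Q_{n,j}`, with `H_{n,m} ≡ (-1)^m`. -/
def Hform (m : ℕ) (σ : ℕ → Measure ℝ) (A : ℕ → Polynomial ℝ) (Q : ℕ → Polynomial ℝ)
    (j : ℕ) (z : ℂ) : ℂ :=
  if j = m then (-1 : ℂ) ^ m
  else Polynomial.aeval z (Q (j + 1)) * formA m σ A j z / Polynomial.aeval z (Q j)

/-- The normalizing constants `K_{n,j}`. -/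
def Kconst (m : ℕ) (σ : ℕ → Measure ℝ) (A : ℕ → Polynomial ℝ) (Q : ℕ → Polynomial ℝ)
    (j : ℕ) : ℝ :=
  if j = m then 1
  else (∫ x, (Polynomial.eval x (Q (j + 1))) ^ 2 *
      ‖Hform m σ A Q (j + 1) (x : ℂ)‖ /
      |Polynomial.eval x (Q j) * Polynomial.eval x (Q (j + 2))| ∂(σ (j + 1))) ^ (-(1 / 2) : ℝ)

/-- `κ_{n,j} = K_{n,j-1} / K_{n,j}`. -/
def kappaC (m : ℕ) (σ : ℕ → Measure ℝ) (A : ℕ → Polynomial ℝ) (Q : ℕ → Polynomial ℝ)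
    (j : ℕ) : ℝ :=
  Kconst m σ A Q (j - 1) / Kconst m σ A Q j

/-- The measure on `(a,b)` with the given Lebesgue density. -/
def densMeasure (a b : ℝ) (ρ : ℝ → ℝ) : Measure ℝ :=
  (volume.restrict (Set.Ioo a b)).withDensity fun x => ENNReal.ofReal (ρ x)

/-- Density of the measure whose Szegő function is `G_j`. -/
def szegoVecDensity (m : ℕ) (a b : ℕ → ℝ) (σ : ℕ → Measure ℝ) (G : ℕ → ℂ → ℂ)
    (j : ℕ) (x : ℝ) : ℝ :=
  rnd (σ j) x /
    ((if j = m then 1 else Real.sqrt (|x - b (j + 1)| * |x - a (j + 1)|)) *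
      ‖G (j - 1) (x : ℂ)‖ * ‖G (j + 1) (x : ℂ)‖)

/-- The measure whose Szegő function is `G_j`. -/
def szegoVecMeasure (m : ℕ) (a b : ℕ → ℝ) (σ : ℕ → Measure ℝ) (G : ℕ → ℂ → ℂ)
    (j : ℕ) : Measure ℝ :=
  densMeasure (a j) (b j) (szegoVecDensity m a b σ G j)

/-- The vector `(G_1,…,G_m)` of Szegő functions solving the system of boundary
value problems (3.1) of the paper. -/
def IsSzegoVector (m : ℕ) (a b : ℕ → ℝ) (σ : ℕ → Measure ℝ) (G : ℕ → ℂ → ℂ) : Prop :=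
  (∀ z, G 0 z = 1) ∧ (∀ z, G (m + 1) z = 1) ∧
  ∀ j, 1 ≤ j → j ≤ m → G j = szegoFn (szegoVecMeasure m a b σ G j) (a j) (b j)

/-- `G_j(∞)`. -/
def szegoVecInf (m : ℕ) (a b : ℕ → ℝ) (σ : ℕ → Measure ℝ) (G : ℕ → ℂ → ℂ) (j : ℕ) : ℝ :=
  szegoInf (szegoVecMeasure m a b σ G j) (a j) (b j)

/-- Geometric data of the system of intervals: nondegenerate, consecutive ones disjoint. -/
def IntervalData (m : ℕ) (a b : ℕ → ℝ) : Prop :=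
  (∀ j, 1 ≤ j → j ≤ m → a j < b j) ∧
  (∀ j, 1 ≤ j → j < m → Set.Icc (a j) (b j) ∩ Set.Icc (a (j + 1)) (b (j + 1)) = ∅)

/-- Basic data of a Nikishin system of measures. -/
def NikishinData (m : ℕ) (a b : ℕ → ℝ) (σ : ℕ → Measure ℝ) : Prop :=
  IntervalData m a b ∧
  ∀ j, 1 ≤ j → j ≤ m →
    IsFiniteMeasure (σ j) ∧ σ j (Set.Icc (a j) (b j))ᶜ = 0 ∧ (msupport (σ j)).Infinite

/-- `p_1 > 0`, `p_1 ≥ p_2 ≥ ⋯ ≥ p_m ≥ 0`, `p_1 + ⋯ + p_m = 1`. -/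
def IsAdmissibleP (m : ℕ) (p : ℕ → ℝ) : Prop :=
  0 < p 1 ∧ (∀ j, 1 ≤ j → j < m → p (j + 1) ≤ p j) ∧
  (∀ j, 1 ≤ j → j ≤ m → 0 ≤ p j) ∧ ∑ i ∈ Finset.Icc 1 m, p i = 1

/-- A straight ray sequence of distinct multi-indices with `n_j = p_j |n|`. -/
def IsStraightRay (m : ℕ) (p : ℕ → ℝ) (N : ℕ → ℕ → ℕ) : Prop :=
  (∀ k l : ℕ, (∀ j, 1 ≤ j → j ≤ m → N k j = N l j) → k = l) ∧
  ∀ k, 0 < nsum m (N k) ∧ ∀ j, 1 ≤ j → j ≤ m → (N k j : ℝ) = p j * (nsum m (N k) : ℝ)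

/-- `Δ_{j-1} ∪ Δ_{j+1} ⊆ ℝ`. -/
def nbrSet (m : ℕ) (a b : ℕ → ℝ) (j : ℕ) : Set ℝ :=
  rSeg m a b (j - 1) ∪ rSeg m a b (j + 1)

/-- `Δ_{j-1} ∪ Δ_{j+1} ⊆ ℂ`. -/
def cNbrSet (m : ℕ) (a b : ℕ → ℝ) (j : ℕ) : Set ℂ :=
  cSeg m a b (j - 1) ∪ cSeg m a b (j + 1)

/-- Membership in `C⁺(Δ⃗)`. -/
def MemCplus (m : ℕ) (a b : ℕ → ℝ) (f : ℕ → ℝ → ℝ) : Prop :=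
  ∀ j, 1 ≤ j → j ≤ m →
    ContinuousOn (f j) (nbrSet m a b j) ∧ ∀ x ∈ nbrSet m a b j, 0 < f j x

/-- The metric `d` on `C⁺(Δ⃗)`. -/
def dC (m : ℕ) (a b : ℕ → ℝ) (f g : ℕ → ℝ → ℝ) : ℝ :=
  sSup {r | ∃ j, 1 ≤ j ∧ j ≤ m ∧ ∃ x ∈ nbrSet m a b j, r = |Real.log (f j x / g j x)|}

/-- The sup norm on `C(Δ⃗)`. -/
def normC (m : ℕ) (a b : ℕ → ℝ) (f : ℕ → ℝ → ℝ) : ℝ :=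
  sSup {r | ∃ j, 1 ≤ j ∧ j ≤ m ∧ ∃ x ∈ nbrSet m a b j, r = |f j x|}

/-- The (positive) values of a Szegő function on the real axis. -/
def realSzego (μ : Measure ℝ) (a b : ℝ) (x : ℝ) : ℝ := ‖szegoFn μ a b (x : ℂ)‖

/-- Density used in the definition of the operator `T_w`. -/
def TwDensity (m : ℕ) (a b : ℕ → ℝ) (w : ℕ → ℝ → ℝ) (f : ℕ → ℝ → ℝ) (j : ℕ) (x : ℝ) : ℝ :=
  w j x / (Real.sqrt ((b j - x) * (x - a j)) *
    (if 2 ≤ j then f (j - 1) x else 1) * (if j + 1 ≤ m then f (j + 1) x else 1))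

/-- The operator `T_w` on `C⁺(Δ⃗)`. -/
def Tw (m : ℕ) (a b : ℕ → ℝ) (w : ℕ → ℝ → ℝ) (f : ℕ → ℝ → ℝ) : ℕ → ℝ → ℝ := fun j x =>
  if 1 ≤ j ∧ j ≤ m then
    realSzego (densMeasure (a j) (b j) (TwDensity m a b w f j)) (a j) (b j) x
  else 1

/-- Szegő-class vector weights for the operator `T_w`. -/
def IsSzegoWeight (m : ℕ) (a b : ℕ → ℝ) (w : ℕ → ℝ → ℝ) : Prop :=
  ∀ j, 1 ≤ j → j ≤ m → (∀ x ∈ Set.Icc (a j) (b j), 0 ≤ w j x) ∧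
    IntegrableOn (fun x => Real.log (w j x) / Real.sqrt ((b j - x) * (x - a j)))
      (Set.Ioo (a j) (b j)) volume

/-- Membership in `P_n`: monic real polynomials `Q_j` of degree `η_{n,j}` with no zeros
on `Δ_{j-1} ∪ Δ_{j+1}`. -/
def MemPn (m : ℕ) (a b : ℕ → ℝ) (n : ℕ → ℕ) (Qt : ℕ → Polynomial ℝ) : Prop :=
  Qt 0 = 1 ∧ Qt (m + 1) = 1 ∧
  ∀ j, 1 ≤ j → j ≤ m → (Qt j).Monic ∧ (Qt j).natDegree = etaIdx n j ∧
    ∀ z : ℂ, Polynomial.aeval z (Qt j) = 0 → z ∉ cNbrSet m a b j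

/-- Generic normalizing constants `K_j(Q⃗*)`. -/
def KcGen (m : ℕ) (σ : ℕ → Measure ℝ) (Qt Qs : ℕ → Polynomial ℝ) (H : ℕ → ℂ → ℂ)
    (j : ℕ) : ℝ :=
  if j = m then 1
  else (∫ x, (Polynomial.eval x (Qs (j + 1))) ^ 2 * ‖H (j + 1) (x : ℂ)‖ /
      |Polynomial.eval x (Qt j) * Polynomial.eval x (Qt (j + 2))| ∂(σ (j + 1))) ^ (-(1 / 2) : ℝ)

/-- `κ_j(Q⃗*) = K_{j-1}(Q⃗*) / K_j(Q⃗*)`. -/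
def kappaGen (m : ℕ) (σ : ℕ → Measure ℝ) (Qt Qs : ℕ → Polynomial ℝ) (H : ℕ → ℂ → ℂ)
    (j : ℕ) : ℝ :=
  KcGen m σ Qt Qs H (j - 1) / KcGen m σ Qt Qs H j

/-- The measure `ρ_j` with density `h̃_j σ_j' / (f_{j-1} f_{j+1})` on `Δ_j`. -/
def rhoMeas (m : ℕ) (a b : ℕ → ℝ) (σ : ℕ → Measure ℝ) (f : ℕ → ℝ → ℝ) (j : ℕ) : Measure ℝ :=
  densMeasure (a j) (b j) fun x =>
    (if j = m then 1 else (Real.sqrt (|x - b (j + 1)| * |x - a (j + 1)|))⁻¹) * rnd (σ j) x /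
      (f (j - 1) x * f (j + 1) x)

/-- The forms `A_j = a_j + Σ_{k=j+1}^m a_k ŝ_{j+1,k}` (without alternating signs). -/
def formGen (m : ℕ) (σ : ℕ → Measure ℝ) (aP : ℕ → Polynomial ℝ) (j : ℕ) (z : ℂ) : ℂ :=
  Polynomial.aeval z (aP j) +
    ∑ k ∈ Finset.Icc (j + 1) m, Polynomial.aeval z (aP k) * sHat σ (j + 1) k z

/-- Auxiliary iterated Cauchy kernel. -/
def kern (σ : ℕ → Measure ℝ) : ℕ → ℕ → ℝ → ℝ → ℝ
  | 0, _ => fun x y => 1 / (x - y)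
  | g + 1, i => fun x y => ∫ t, kern σ g (i + 1) t y / (x - t) ∂(σ i)

/-- The Cauchy biorthogonality kernel `K(x_1, x_m)`. -/
def biKernel (σ : ℕ → Measure ℝ) (m : ℕ) (x y : ℝ) : ℝ :=
  if m = 2 then 1 else kern σ (m - 2) 2 x y

/-- Walks of length `L` on the path graph `{1,…,m}` starting at `r`
(encoded as sequences vanishing after time `L`). -/
def walkSet (m L r : ℕ) : Set (ℕ → ℕ) :=
  {β | β 0 = r ∧ (∀ i, i ≤ L → 1 ≤ β i ∧ β i ≤ m) ∧
    (∀ i, i < L → β (i + 1) = β i + 1 ∨ β i = β (i + 1) + 1) ∧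
    ∀ i, L < i → β i = 0}

end

namespace MaxWalkAux

def T (s : ℕ → Bool) (i : ℕ) : ℕ := ((Finset.range i).filter (fun j => s j = true)).card

lemma T_zero (s : ℕ → Bool) : T s 0 = 0 := by simp [T]

lemma T_succ (s : ℕ → Bool) (i : ℕ) :
    T s (i + 1) = T s i + (if s i then 1 else 0) := by
  unfold T
  rw [Finset.range_add_one, Finset.filter_insert]
  split_ifs with h
  · rw [Finset.card_insert_of_notMem (by simp)]
  · rfl

lemma T_succ_true {s : ℕ → Bool} {i : ℕ} (h : s i = true) : T s (i + 1) = T s i + 1 := by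
  rw [T_succ, h]; rfl

lemma T_succ_false {s : ℕ → Bool} {i : ℕ} (h : s i = false) : T s (i + 1) = T s i := by
  rw [T_succ, h]; rfl

lemma T_le (s : ℕ → Bool) (i : ℕ) : T s i ≤ i :=
  le_trans (Finset.card_filter_le _ _) (by simp)

def Valid (m L r : ℕ) (s : ℕ → Bool) : Prop :=
  ∀ i ≤ L, i + 1 ≤ r + 2 * T s i ∧ r + 2 * T s i ≤ m + i

def wk (L r : ℕ) (s : ℕ → Bool) (i : ℕ) : ℕ := if i ≤ L then r + 2 * T s i - i else 0

def ext (L : ℕ) (s : Fin L → Bool) : ℕ → Bool := fun j => if h : j < L then s ⟨j, h⟩ else false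

lemma wk_mem {m L r : ℕ} {s : ℕ → Bool} (hV : Valid m L r s) : wk L r s ∈ walkSet m L r := by
  refine ⟨?_, ?_, ?_, ?_⟩
  · simp [wk, T_zero]
  · intro i hi
    have h := hV i hi
    simp only [wk, if_pos hi]
    omega
  · intro i hi
    have h1 := hV i (le_of_lt hi)
    have hi1 : i + 1 ≤ L := hi
    simp only [wk, if_pos (le_of_lt hi), if_pos hi1]
    rcases Bool.eq_false_or_eq_true (s i) with hs | hs
    · left; rw [T_succ_true hs]; omega
    · right; rw [T_succ_false hs]; omega
  · intro i hi
    simp only [wk, if_neg (by omega : ¬ i ≤ L)]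

lemma mem_inv {m L r : ℕ} {β : ℕ → ℕ} (hβ : β ∈ walkSet m L r) :
    ∃ s : Fin L → Bool, Valid m L r (ext L s) ∧ wk L r (ext L s) = β := by
  obtain ⟨h0, hb, hstep, hz⟩ := hβ
  refine ⟨fun j => decide (β (j.1 + 1) = β j.1 + 1), ?_⟩
  have hext : ∀ j, j < L → ext L (fun j : Fin L => decide (β (j.1 + 1) = β j.1 + 1)) j
      = decide (β (j + 1) = β j + 1) := fun j hj => dif_pos hj
  have key : ∀ i ≤ L, β i + i
      = r + 2 * T (ext L (fun j : Fin L => decide (β (j.1 + 1) = β j.1 + 1))) i := by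
    intro i
    induction i with
    | zero => intro _; simp [h0, T_zero]
    | succ i ih =>
      intro hi
      have hi' : i ≤ L := by omega
      have hk := ih hi'
      rcases hstep i (by omega) with h | h
      · have hT := T_succ_true (s := ext L (fun j : Fin L => decide (β (j.1 + 1) = β j.1 + 1)))
          (i := i) (by rw [hext i (by omega)]; exact decide_eq_true h)
        omega
      · have hd : ¬ (β (i+1) = β i + 1) := by omega
        have hT := T_succ_false (s := ext L (fun j : Fin L => decide (β (j.1 + 1) = β j.1 + 1)))
          (i := i) (by rw [hext i (by omega)]; exact decide_eq_false hd)
        omega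
  constructor
  · intro i hi
    have := hb i hi
    have := key i hi
    omega
  · funext i
    by_cases hi : i ≤ L
    · have := key i hi
      have := hb i hi
      simp only [wk, if_pos hi]
      omega
    · simp only [wk, if_neg hi]
      exact (hz i (by omega)).symm

lemma wk_inj {m L r : ℕ} {s s' : Fin L → Bool} (hV : Valid m L r (ext L s))
    (hV' : Valid m L r (ext L s'))
    (h : wk L r (ext L s) = wk L r (ext L s')) : s = s' := by
  have hT : ∀ i ≤ L, T (ext L s) i = T (ext L s') i := by
    intro i hi
    have h1 := (hV i hi).1
    have h2 := (hV' i hi).1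
    have h3 := congrFun h i
    simp only [wk, if_pos hi] at h3
    omega
  funext j
  have j1 := hT j.1 (le_of_lt j.2)
  have j2 := hT (j.1+1) j.2
  have e1 : ext L s j.1 = s j := by simp [ext, j.2]
  have e2 : ext L s' j.1 = s' j := by simp [ext, j.2]
  cases hb : s j <;> cases hb' : s' j
  · rfl
  · exfalso
    have t1 := T_succ_false (e1.trans hb)
    have t2 := T_succ_true (e2.trans hb')
    omega
  · exfalso
    have t1 := T_succ_true (e1.trans hb)
    have t2 := T_succ_false (e2.trans hb')
    omega
  · rfl

lemma walkSet_eq (m L r : ℕ) :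
    walkSet m L r = (fun s : Fin L → Bool => wk L r (ext L s)) '' {s | Valid m L r (ext L s)} := by
  ext β
  constructor
  · intro hβ
    obtain ⟨s, h1, h2⟩ := mem_inv hβ
    exact ⟨s, h1, h2⟩
  · rintro ⟨s, h1, rfl⟩
    exact wk_mem h1

lemma count (m L r : ℕ) :
    (walkSet m L r).ncard = 2 ^ L - {s : Fin L → Bool | ¬ Valid m L r (ext L s)}.ncard := by
  rw [walkSet_eq]
  have hinj : Set.InjOn (fun s : Fin L → Bool => wk L r (ext L s))
      {s | Valid m L r (ext L s)} := fun s hs s' hs' h => wk_inj hs hs' h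
  rw [Set.ncard_image_of_injOn hinj]
  have hcompl : {s : Fin L → Bool | Valid m L r (ext L s)}
      = {s : Fin L → Bool | ¬ Valid m L r (ext L s)}ᶜ := by
    ext s; simp
  rw [hcompl]
  have h1 := Set.ncard_add_ncard_compl {s : Fin L → Bool | ¬ Valid m L r (ext L s)}
  have hcard : Nat.card (Fin L → Bool) = 2 ^ L := by
    simp [Nat.card_eq_fintype_card]
  omega


lemma T_ext_eq_zero {L : ℕ} (s : Fin L → Bool) (i : ℕ)
    (h : ∀ j (hj : j < L), j < i → s ⟨j, hj⟩ = false) : T (ext L s) i = 0 := by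
  unfold T
  rw [Finset.card_eq_zero, Finset.filter_eq_empty_iff]
  intro j hj
  rw [Finset.mem_range] at hj
  unfold ext
  by_cases hjL : j < L
  · rw [dif_pos hjL, h j hjL hj]; simp
  · rw [dif_neg hjL]; simp

lemma T_ext_eq_self {L : ℕ} (s : Fin L → Bool) (i : ℕ) (hi : i ≤ L)
    (h : ∀ j (hj : j < L), j < i → s ⟨j, hj⟩ = true) : T (ext L s) i = i := by
  unfold T
  rw [Finset.filter_true_of_mem, Finset.card_range]
  intro j hj
  rw [Finset.mem_range] at hj
  have hjL : j < L := by omega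
  unfold ext
  rw [dif_pos hjL, h j hjL hj]

lemma eq_false_of_T {L : ℕ} {s : Fin L → Bool} (h : T (ext L s) L = 0) :
    s = fun _ => false := by
  funext j
  rw [T, Finset.card_eq_zero, Finset.filter_eq_empty_iff] at h
  have := h (Finset.mem_range.2 j.2)
  rw [ext, dif_pos j.2] at this
  simpa using this

lemma eq_true_of_T {L : ℕ} {s : Fin L → Bool} (h : T (ext L s) L = L) :
    s = fun _ => true := by
  have heq := Finset.eq_of_subset_of_card_le
    (Finset.filter_subset (fun k => ext L s k = true) (Finset.range L))
    (by rw [T] at h; rw [Finset.card_range, h])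
  funext j
  have hmem : (j : ℕ) ∈ (Finset.range L).filter (fun k => ext L s k = true) := by
    rw [heq]; exact Finset.mem_range.2 j.2
  have := (Finset.mem_filter.1 hmem).2
  rw [ext, dif_pos j.2] at this
  simpa using this

lemma odd_invalid (k : ℕ) :
    {s : Fin (k+1) → Bool | ¬ Valid (2*k+1) (k+1) (k+1) (ext (k+1) s)}
      = {fun _ => false, fun _ => true} := by
  ext s
  simp only [Set.mem_setOf_eq, Set.mem_insert_iff, Set.mem_singleton_iff]
  constructor
  · intro h
    rw [Valid] at h
    push_neg at h
    obtain ⟨i, hi, hbad⟩ := h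
    have hT := T_le (ext (k+1) s) i
    have hcase : i = k + 1 ∧ (T (ext (k+1) s) i = 0 ∨ T (ext (k+1) s) i = k + 1) := by
      by_cases h1 : i + 1 ≤ k + 1 + 2 * T (ext (k+1) s) i
      · have h2 := hbad h1
        omega
      · omega
    obtain ⟨rfl, h0 | h1⟩ := hcase
    · exact Or.inl (eq_false_of_T h0)
    · exact Or.inr (eq_true_of_T h1)
  · rintro (rfl | rfl) <;> intro hV
    · have := (hV (k+1) le_rfl).1
      rw [T_ext_eq_zero _ _ (fun _ _ _ => rfl)] at this
      omega
    · have := (hV (k+1) le_rfl).2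
      rw [T_ext_eq_self _ _ le_rfl (fun _ _ _ => rfl)] at this
      omega

lemma even_invalid (k : ℕ) :
    {s : Fin k → Bool | ¬ Valid (2*k) k k (ext k s)} = {fun _ => false} := by
  ext s
  simp only [Set.mem_setOf_eq, Set.mem_singleton_iff]
  constructor
  · intro h
    rw [Valid] at h
    push_neg at h
    obtain ⟨i, hi, hbad⟩ := h
    have hT := T_le (ext k s) i
    have hcase : i = k ∧ T (ext k s) i = 0 := by
      by_cases h1 : i + 1 ≤ k + 2 * T (ext k s) i
      · have h2 := hbad h1
        omega
      · omega
    obtain ⟨rfl, h0⟩ := hcase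
    exact eq_false_of_T h0
  · rintro rfl
    intro hV
    have := (hV k le_rfl).1
    rw [T_ext_eq_zero _ _ (fun _ _ _ => rfl)] at this
    omega

lemma odd_lower (k r : ℕ) (hk : 1 ≤ k) (hr1 : 1 ≤ r) (hr2 : r ≤ 2*k+1) :
    2 ≤ {s : Fin (k+1) → Bool | ¬ Valid (2*k+1) (k+1) r (ext (k+1) s)}.ncard := by
  have hkk : k < k + 1 := by omega
  rcases le_or_gt r k with hle | hgt
  · -- r ≤ k : const false and the indicator of {k} are both invalid
    have ha : ¬ Valid (2*k+1) (k+1) r (ext (k+1) (fun _ => false)) := by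
      intro hV
      have := (hV r (by omega)).1
      rw [T_ext_eq_zero _ _ (fun _ _ _ => rfl)] at this
      omega
    have hb : ¬ Valid (2*k+1) (k+1) r (ext (k+1) (fun j => decide (j.1 = k))) := by
      intro hV
      have := (hV r (by omega)).1
      rw [T_ext_eq_zero _ _ (fun j hj hjr => by simp only [Fin.val_mk, decide_eq_false_iff_not]; omega)] at this
      omega
    have hne : (fun _ : Fin (k+1) => false) ≠ (fun j : Fin (k+1) => decide (j.1 = k)) := by
      intro h
      have := congrFun h ⟨k, hkk⟩
      simp at this
    calc 2 = ({fun _ => false, fun j : Fin (k+1) => decide (j.1 = k)} : Set _).ncard :=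
        (Set.ncard_pair hne).symm
      _ ≤ _ := Set.ncard_le_ncard (by
          rintro x (rfl | rfl)
          exacts [ha, hb]) (Set.toFinite _)
  · rcases eq_or_lt_of_le (show k + 1 ≤ r from hgt) with heq | hgt2
    · -- r = k+1 : const false and const true
      have ha : ¬ Valid (2*k+1) (k+1) r (ext (k+1) (fun _ => false)) := by
        intro hV
        have := (hV (k+1) le_rfl).1
        rw [T_ext_eq_zero _ _ (fun _ _ _ => rfl)] at this
        omega
      have hb : ¬ Valid (2*k+1) (k+1) r (ext (k+1) (fun _ => true)) := by
        intro hV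
        have := (hV (k+1) le_rfl).2
        rw [T_ext_eq_self _ _ le_rfl (fun _ _ _ => rfl)] at this
        omega
      have hne : (fun _ : Fin (k+1) => false) ≠ (fun _ : Fin (k+1) => true) := by
        intro h
        have := congrFun h ⟨0, by omega⟩
        simp at this
      calc 2 = ({fun _ => false, fun _ : Fin (k+1) => true} : Set _).ncard :=
          (Set.ncard_pair hne).symm
        _ ≤ _ := Set.ncard_le_ncard (by
            rintro x (rfl | rfl)
            exacts [ha, hb]) (Set.toFinite _)
    · -- r ≥ k+2 : const true and the indicator of the complement of {k}
      set i := 2*k+2-r with hidef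
      have hi1 : 1 ≤ i := by omega
      have hik : i ≤ k := by omega
      have ha : ¬ Valid (2*k+1) (k+1) r (ext (k+1) (fun _ => true)) := by
        intro hV
        have := (hV i (by omega)).2
        rw [T_ext_eq_self _ _ (by omega) (fun _ _ _ => rfl)] at this
        omega
      have hb : ¬ Valid (2*k+1) (k+1) r (ext (k+1) (fun j => decide (j.1 ≠ k))) := by
        intro hV
        have := (hV i (by omega)).2
        rw [T_ext_eq_self _ _ (by omega) (fun j hj hji => by simp only [Fin.val_mk, decide_eq_true_eq]; omega)] at this
        omega
      have hne : (fun _ : Fin (k+1) => true) ≠ (fun j : Fin (k+1) => decide (j.1 ≠ k)) := by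
        intro h
        have := congrFun h ⟨k, hkk⟩
        simp at this
      calc 2 = ({fun _ => true, fun j : Fin (k+1) => decide (j.1 ≠ k)} : Set _).ncard :=
          (Set.ncard_pair hne).symm
        _ ≤ _ := Set.ncard_le_ncard (by
            rintro x (rfl | rfl)
            exacts [ha, hb]) (Set.toFinite _)

lemma even_lower (k r : ℕ) (hk : 2 ≤ k) (hr1 : 1 ≤ r) (hr2 : r ≤ 2*k) :
    1 ≤ {s : Fin k → Bool | ¬ Valid (2*k) k r (ext k s)}.ncard := by
  rcases le_or_gt r k with hle | hgt
  · have ha : ¬ Valid (2*k) k r (ext k (fun _ => false)) := by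
      intro hV
      have := (hV r (by omega)).1
      rw [T_ext_eq_zero _ _ (fun _ _ _ => rfl)] at this
      omega
    have : ({s : Fin k → Bool | ¬ Valid (2*k) k r (ext k s)}).Nonempty := ⟨_, ha⟩
    rw [Nat.one_le_iff_ne_zero]
    intro h0
    rw [Set.ncard_eq_zero (Set.toFinite _)] at h0
    exact absurd (h0 ▸ this) (by simp)
  · set i := 2*k+1-r with hidef
    have ha : ¬ Valid (2*k) k r (ext k (fun _ => true)) := by
      intro hV
      have := (hV i (by omega)).2
      rw [T_ext_eq_self _ _ (by omega) (fun _ _ _ => rfl)] at this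
      omega
    have : ({s : Fin k → Bool | ¬ Valid (2*k) k r (ext k s)}).Nonempty := ⟨_, ha⟩
    rw [Nat.one_le_iff_ne_zero]
    intro h0
    rw [Set.ncard_eq_zero (Set.toFinite _)] at h0
    exact absurd (h0 ▸ this) (by simp)

end MaxWalkAux


/-- The combinatorial count behind Theorem 1.5: the maximal number of walks of
length `m̄ = ⌈m/2⌉` on the path graph `{1,…,m}` starting at some vertex `r` is
`2^m̄ - 2` for odd `m` and `2^m̄ - 1` for even `m` (`m ≥ 3`). -/
theorem max_walk_count (m : ℕ) (hm : 3 ≤ m) :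
    IsGreatest ((fun r => (walkSet m ((m + 1) / 2) r).ncard) '' Set.Icc 1 m)
      (if m % 2 = 1 then 2 ^ ((m + 1) / 2) - 2 else 2 ^ ((m + 1) / 2) - 1) := by
  by_cases hpar : m % 2 = 1
  · rw [if_pos hpar]
    obtain ⟨k, rfl⟩ : ∃ k, m = 2*k+1 := ⟨m/2, by omega⟩
    have hk1 : 1 ≤ k := by omega
    have hL : (2*k+1+1)/2 = k+1 := by omega
    rw [hL]
    constructor
    · refine ⟨k+1, ⟨by omega, by omega⟩, ?_⟩
      show (walkSet (2*k+1) (k+1) (k+1)).ncard = 2 ^ (k+1) - 2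
      rw [MaxWalkAux.count, MaxWalkAux.odd_invalid]
      have hne : (fun _ : Fin (k+1) => false) ≠ (fun _ : Fin (k+1) => true) := by
        intro h
        have := congrFun h ⟨0, by omega⟩
        simp at this
      rw [Set.ncard_pair hne]
    · rintro x ⟨r, ⟨hr1, hr2⟩, rfl⟩
      show (walkSet (2*k+1) (k+1) r).ncard ≤ 2 ^ (k+1) - 2
      rw [MaxWalkAux.count]
      exact Nat.sub_le_sub_left (MaxWalkAux.odd_lower k r hk1 hr1 hr2) _
  · rw [if_neg hpar]
    obtain ⟨k, rfl⟩ : ∃ k, m = 2*k := ⟨m/2, by omega⟩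
    have hk2 : 2 ≤ k := by omega
    have hL : (2*k+1)/2 = k := by omega
    rw [hL]
    constructor
    · refine ⟨k, ⟨by omega, by omega⟩, ?_⟩
      show (walkSet (2*k) k k).ncard = 2 ^ k - 1
      rw [MaxWalkAux.count, MaxWalkAux.even_invalid, Set.ncard_singleton]
    · rintro x ⟨r, ⟨hr1, hr2⟩, rfl⟩
      show (walkSet (2*k) k r).ncard ≤ 2 ^ k - 1
      rw [MaxWalkAux.count]
      exact Nat.sub_le_sub_left (MaxWalkAux.even_lower k r hk2 hr1 hr2) _
end

section
/- Let a_0,…,a_m be real polynomials and let Q be a monic polynomial with real coefficients all of whose roots lie in ℂ∖Δ_1. Set A_0 := a_0 + Σ_{k=1}^m a_k ŝ_{1,k} and A_1 := a_1 + Σ_{k=2}^m a_k ŝ_{2,k}. Suppose A_0/Q is holomorphic in ℂ∖Δ_1 and that for some integer N ≥ 1 the function z^N·A_0(z)/Q(z) remains bounded as z → ∞. Then for every z ∈ ℂ∖Δ_1, A_0(z)/Q(z) = ∫ A_1(x)/((z−x) Q(x)) dσ_1(x). -/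
open MeasureTheory Filter Topology

section MyAux
open Polynomial

noncomputable def divS (p : Polynomial ℂ) (z x : ℂ) : ℂ :=
  ∑ j ∈ Finset.range (p.natDegree + 1), p.coeff j * ∑ i ∈ Finset.range j, z ^ i * x ^ (j - 1 - i)

lemma divS_mul (p : Polynomial ℂ) (z x : ℂ) :
    (z - x) * divS p z x = p.eval z - p.eval x := by
  have key : ∀ j : ℕ, (z - x) * (p.coeff j * ∑ i ∈ Finset.range j, z ^ i * x ^ (j - 1 - i))
      = p.coeff j * z ^ j - p.coeff j * x ^ j := by
    intro j
    have h := geom_sum₂_mul z x j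
    calc (z - x) * (p.coeff j * ∑ i ∈ Finset.range j, z ^ i * x ^ (j - 1 - i))
        = p.coeff j * ((∑ i ∈ Finset.range j, z ^ i * x ^ (j - 1 - i)) * (z - x)) := by ring
      _ = p.coeff j * (z ^ j - x ^ j) := by rw [h]
      _ = _ := by ring
  rw [divS, Finset.mul_sum, Finset.sum_congr rfl fun j _ => key j, Finset.sum_sub_distrib,
    Polynomial.eval_eq_sum_range, Polynomial.eval_eq_sum_range]

lemma continuous_divS (p : Polynomial ℂ) (z : ℂ) :
    Continuous fun x : ℝ => divS p z ((x : ℝ) : ℂ) := by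
  unfold divS
  refine continuous_finset_sum _ fun j _ => Continuous.mul continuous_const ?_
  exact continuous_finset_sum _ fun i _ => continuous_const.mul (Complex.continuous_ofReal.pow _)

lemma exists_poly_integral (μ : Measure ℝ) [IsFiniteMeasure μ] (p : Polynomial ℂ) (w : ℝ → ℂ)
    (hint : ∀ e : ℕ, Integrable (fun x : ℝ => ((x : ℝ) : ℂ) ^ e * w x) μ) :
    ∃ P : Polynomial ℂ, ∀ z : ℂ, ∫ x, divS p z ((x : ℝ) : ℂ) * w x ∂μ = P.eval z := by
  refine ⟨∑ j ∈ Finset.range (p.natDegree + 1), ∑ i ∈ Finset.range j,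
      Polynomial.C (p.coeff j * ∫ x, ((x : ℝ) : ℂ) ^ (j - 1 - i) * w x ∂μ) * Polynomial.X ^ i,
      fun z => ?_⟩
  have h1 : (fun x : ℝ => divS p z ((x : ℝ) : ℂ) * w x)
      = fun x : ℝ => ∑ j ∈ Finset.range (p.natDegree + 1), ∑ i ∈ Finset.range j,
          (p.coeff j * z ^ i) * (((x : ℝ) : ℂ) ^ (j - 1 - i) * w x) := by
    funext x
    rw [divS, Finset.sum_mul]
    refine Finset.sum_congr rfl fun j _ => ?_
    rw [Finset.mul_sum, Finset.sum_mul]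
    exact Finset.sum_congr rfl fun i _ => by ring
  rw [h1, integral_finset_sum _ fun j _ =>
    integrable_finset_sum _ fun i _ => (hint _).const_mul _]
  simp only [Polynomial.eval_finset_sum, Polynomial.eval_mul, Polynomial.eval_C,
    Polynomial.eval_pow, Polynomial.eval_X]
  refine Finset.sum_congr rfl fun j _ => ?_
  rw [integral_finset_sum _ fun i _ => (hint _).const_mul _]
  refine Finset.sum_congr rfl fun i _ => ?_
  rw [integral_const_mul]
  ring

lemma integrable_of_bound' (μ : Measure ℝ) [IsFiniteMeasure μ] (K : Set ℝ) (hK : μ Kᶜ = 0)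
    (f : ℝ → ℂ) (hf : AEStronglyMeasurable f μ) (M : ℝ) (hM : ∀ x ∈ K, ‖f x‖ ≤ M) :
    Integrable f μ := by
  have hae : ∀ᵐ x ∂μ, x ∈ K := by
    rw [MeasureTheory.ae_iff]; simpa [Set.compl_def] using hK
  exact Integrable.mono' (integrable_const M) hf (hae.mono fun x hx => hM x hx)

lemma disjoint_Icc_dist {a₁ b₁ a₂ b₂ : ℝ} (h₁ : a₁ ≤ b₁) (h₂ : a₂ ≤ b₂)
    (hd : Set.Icc a₁ b₁ ∩ Set.Icc a₂ b₂ = ∅) :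
    ∃ δ : ℝ, 0 < δ ∧ ∀ x ∈ Set.Icc a₁ b₁, ∀ t ∈ Set.Icc a₂ b₂, δ ≤ |x - t| := by
  by_cases hc : b₁ < a₂
  · refine ⟨a₂ - b₁, by linarith, fun x hx t ht => ?_⟩
    have h3 : -(x - t) ≤ |x - t| := neg_le_abs _
    have := hx.2; have := ht.1
    linarith
  · have hc2 : b₂ < a₁ := by
      by_contra h
      push_neg at h hc
      have hmem : max a₁ a₂ ∈ Set.Icc a₁ b₁ ∩ Set.Icc a₂ b₂ :=
        ⟨⟨le_max_left _ _, max_le h₁ hc⟩, ⟨le_max_right _ _, max_le h h₂⟩⟩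
      rw [hd] at hmem; exact hmem
    refine ⟨a₁ - b₂, by linarith, fun x hx t ht => ?_⟩
    have h4 : x - t ≤ |x - t| := le_abs_self _
    have := hx.1; have := ht.2
    linarith

lemma bdd_sum (s : Finset ℕ) (f : ℕ → ℝ → ℂ) (K : Set ℝ)
    (h : ∀ k, ∃ M, 0 ≤ M ∧ ∀ x ∈ K, k ∈ s → ‖f k x‖ ≤ M) :
    ∃ M, 0 ≤ M ∧ ∀ x ∈ K, ‖∑ k ∈ s, f k x‖ ≤ M := by
  choose M hM0 hM using h
  refine ⟨∑ k ∈ s, M k, Finset.sum_nonneg fun k _ => hM0 k, fun x hx => ?_⟩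
  calc ‖∑ k ∈ s, f k x‖ ≤ ∑ k ∈ s, ‖f k x‖ := norm_sum_le _ _
    _ ≤ ∑ k ∈ s, M k := Finset.sum_le_sum fun k hk => hM k x hx hk

lemma eqzero_of_eq_off_finite {U : Set ℂ} (hU : IsOpen U) {S : Set ℂ} (hS : S.Finite)
    {f : ℂ → ℂ} (hf : ContinuousOn f U) (h : ∀ z ∈ U, z ∉ S → f z = 0) :
    ∀ z ∈ U, f z = 0 := by
  intro z₀ hz₀
  by_cases hzS : z₀ ∈ S
  · set V : Set ℂ := U ∩ (S \ {z₀})ᶜ with hVdef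
    have hV : IsOpen V := hU.inter (hS.subset Set.diff_subset).isClosed.isOpen_compl
    have hzV : z₀ ∈ V := ⟨hz₀, fun hzz => hzz.2 rfl⟩
    have hVmem : V ∈ 𝓝 z₀ := hV.mem_nhds hzV
    have hVeq : V \ {z₀} = {z₀}ᶜ ∩ V := by rw [Set.diff_eq, Set.inter_comm]
    have hne : (𝓝[V \ {z₀}] z₀).NeBot := by
      rw [hVeq, ← nhdsWithin_restrict' _ hVmem]
      infer_instance
    have hsub : V \ {z₀} ⊆ U := fun w hw => hw.1.1
    have h1 : Filter.Tendsto f (𝓝[V \ {z₀}] z₀) (𝓝 (f z₀)) :=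
      (hf z₀ hz₀).mono_left (nhdsWithin_mono _ hsub)
    have h2 : Filter.Tendsto f (𝓝[V \ {z₀}] z₀) (𝓝 0) := by
      refine Filter.Tendsto.congr' ?_ tendsto_const_nhds
      filter_upwards [self_mem_nhdsWithin] with w hw
      exact (h w hw.1.1 fun hwS => hw.1.2 ⟨hwS, by simpa using hw.2⟩).symm
    exact tendsto_nhds_unique h1 h2
  · exact h z₀ hz₀ hzS

lemma poly_eq_zero_of_tendsto {p : Polynomial ℂ}
    (h : Filter.Tendsto (fun x : ℝ => Polynomial.eval ((x : ℝ) : ℂ) p) atTop (𝓝 0)) : p = 0 := by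
  rcases le_or_gt p.degree 0 with hd | hd
  · have hp := Polynomial.eq_C_of_degree_le_zero hd
    have h2 : Filter.Tendsto (fun x : ℝ => Polynomial.eval ((x : ℝ) : ℂ) p) atTop
        (𝓝 (p.coeff 0)) := by
      have : (fun x : ℝ => Polynomial.eval ((x : ℝ) : ℂ) p) = fun _ => p.coeff 0 := by
        funext x; rw [hp]; simp
      rw [this]; exact tendsto_const_nhds
    have h0 : p.coeff 0 = 0 := tendsto_nhds_unique h2 h
    rw [hp, h0, map_zero]
  · exfalso
    have hz : Filter.Tendsto (fun x : ℝ => ‖((x : ℝ) : ℂ)‖) atTop atTop := by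
      simp only [Complex.norm_real, Real.norm_eq_abs]
      exact tendsto_abs_atTop_atTop
    have h1 := Polynomial.tendsto_norm_atTop p hd hz
    exact not_tendsto_atTop_of_tendsto_nhds (h.norm.congr (by simp)) h1
lemma nik_meas_bound (m : ℕ) (a b : ℕ → ℝ) (σ : ℕ → Measure ℝ)
    (hNik : NikishinData m a b σ) :
    ∀ g j, 2 ≤ j → j + g ≤ m →
      Measurable (fun x : ℝ => nikAux σ g j ((x : ℝ) : ℂ)) ∧
      ∃ M, 0 ≤ M ∧ ∀ x ∈ Set.Icc (a (j - 1)) (b (j - 1)), ‖nikAux σ g j ((x : ℝ) : ℂ)‖ ≤ M := by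
  obtain ⟨⟨hab, hdisj⟩, hfin⟩ := hNik
  intro g
  induction g with
  | zero =>
    intro j hj2 hjm
    rw [Nat.add_zero] at hjm
    haveI : IsFiniteMeasure (σ j) := (hfin j (by omega) hjm).1
    have hae : ∀ᵐ t ∂σ j, t ∈ Set.Icc (a j) (b j) := by
      rw [MeasureTheory.ae_iff]; simpa [Set.compl_def] using (hfin j (by omega) hjm).2.1
    have hd : Set.Icc (a (j - 1)) (b (j - 1)) ∩ Set.Icc (a j) (b j) = ∅ := by
      have h := hdisj (j - 1) (by omega) (by omega)
      have hjj : j - 1 + 1 = j := by omega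
      rwa [hjj] at h
    obtain ⟨δ, hδ, hδle⟩ := disjoint_Icc_dist (hab (j - 1) (by omega) (by omega)).le
      (hab j (by omega) hjm).le hd
    constructor
    · have hm : Measurable fun q : ℝ × ℝ => ((q.1 : ℂ) - (q.2 : ℂ))⁻¹ :=
        ((Complex.measurable_ofReal.comp measurable_fst).sub
          (Complex.measurable_ofReal.comp measurable_snd)).inv
      have h2 := hm.stronglyMeasurable.integral_prod_right' (ν := σ j)
      have h3 : (fun x : ℝ => nikAux σ 0 j ((x : ℝ) : ℂ))
          = fun x : ℝ => ∫ t, (((x : ℝ) : ℂ) - ((t : ℝ) : ℂ))⁻¹ ∂σ j := by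
        funext x; simp [nikAux, cauchyT]
      rw [h3]; exact h2.measurable
    · refine ⟨δ⁻¹ * (σ j Set.univ).toReal, by positivity, fun x hx => ?_⟩
      have h4 : nikAux σ 0 j ((x : ℝ) : ℂ) = ∫ t, (((x : ℝ) : ℂ) - ((t : ℝ) : ℂ))⁻¹ ∂σ j := by
        simp [nikAux, cauchyT]
      rw [h4]
      refine norm_integral_le_of_norm_le_const (hae.mono fun t ht => ?_)
      rw [norm_inv]
      have h1 : ((x : ℝ) : ℂ) - ((t : ℝ) : ℂ) = (((x - t : ℝ)) : ℂ) := by push_cast; ring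
      rw [h1, Complex.norm_real, Real.norm_eq_abs]
      have h5 := hδle x hx t ht
      exact inv_anti₀ hδ h5
  | succ g ih =>
    intro j hj2 hjm
    obtain ⟨ihm, M, hM0, hMb⟩ := ih (j + 1) (by omega) (by omega)
    have hMb' : ∀ t ∈ Set.Icc (a j) (b j), ‖nikAux σ g (j + 1) ((t : ℝ) : ℂ)‖ ≤ M := by
      have hjj : j + 1 - 1 = j := by omega
      rw [hjj] at hMb; exact hMb
    haveI : IsFiniteMeasure (σ j) := (hfin j (by omega) (by omega)).1
    have hae : ∀ᵐ t ∂σ j, t ∈ Set.Icc (a j) (b j) := by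
      rw [MeasureTheory.ae_iff]; simpa [Set.compl_def] using (hfin j (by omega) (by omega)).2.1
    have hd : Set.Icc (a (j - 1)) (b (j - 1)) ∩ Set.Icc (a j) (b j) = ∅ := by
      have h := hdisj (j - 1) (by omega) (by omega)
      have hjj : j - 1 + 1 = j := by omega
      rwa [hjj] at h
    obtain ⟨δ, hδ, hδle⟩ := disjoint_Icc_dist (hab (j - 1) (by omega) (by omega)).le
      (hab j (by omega) (by omega)).le hd
    constructor
    · have hm : Measurable fun q : ℝ × ℝ =>
          nikAux σ g (j + 1) ((q.2 : ℝ) : ℂ) * (((q.1 : ℝ) : ℂ) - ((q.2 : ℝ) : ℂ))⁻¹ :=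
        (ihm.comp measurable_snd).mul (((Complex.measurable_ofReal.comp measurable_fst).sub
          (Complex.measurable_ofReal.comp measurable_snd)).inv)
      have h2 := hm.stronglyMeasurable.integral_prod_right' (ν := σ j)
      have h3 : (fun x : ℝ => nikAux σ (g + 1) j ((x : ℝ) : ℂ))
          = fun x : ℝ => ∫ t, nikAux σ g (j + 1) ((t : ℝ) : ℂ)
              * (((x : ℝ) : ℂ) - ((t : ℝ) : ℂ))⁻¹ ∂σ j := by
        funext x; simp only [nikAux, div_eq_mul_inv]
      rw [h3]; exact h2.measurable
    · refine ⟨M * δ⁻¹ * (σ j Set.univ).toReal, by positivity, fun x hx => ?_⟩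
      have h4 : nikAux σ (g + 1) j ((x : ℝ) : ℂ)
          = ∫ t, nikAux σ g (j + 1) ((t : ℝ) : ℂ) / (((x : ℝ) : ℂ) - ((t : ℝ) : ℂ)) ∂σ j := by
        simp only [nikAux]
      rw [h4]
      refine norm_integral_le_of_norm_le_const (hae.mono fun t ht => ?_)
      rw [norm_div]
      have h1 : ((x : ℝ) : ℂ) - ((t : ℝ) : ℂ) = (((x - t : ℝ)) : ℂ) := by push_cast; ring
      rw [h1, Complex.norm_real, Real.norm_eq_abs]
      have h5 := hδle x hx t ht
      calc ‖nikAux σ g (j + 1) ((t : ℝ) : ℂ)‖ / |x - t| ≤ M / δ :=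
            div_le_div₀ hM0 (hMb' t ht) hδ h5
        _ = M * δ⁻¹ := div_eq_mul_inv M δ

end MyAux

/-- Formula (2.1) of the paper: if `A_0/Q` is holomorphic in `ℂ ∖ Δ_1` and
`A_0/Q = O(z^{-N})` at `∞` with `N ≥ 1`, then
`A_0(z)/Q(z) = ∫ A_1(x)/((z-x)Q(x)) dσ_1(x)` on `ℂ ∖ Δ_1`. -/
theorem form_reduction_formula
    (m : ℕ) (hm : 2 ≤ m) (a b : ℕ → ℝ) (σ : ℕ → Measure ℝ)
    (hNik : NikishinData m a b σ)
    (aP : ℕ → Polynomial ℝ) (Q : Polynomial ℝ) (hQmonic : Q.Monic)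
    (hQroots : ∀ z : ℂ, Polynomial.aeval z Q = 0 → z ∉ cSeg m a b 1)
    (N : ℕ) (hN : 1 ≤ N) (F : ℂ → ℂ)
    (hF : DifferentiableOn ℂ F (cSeg m a b 1)ᶜ)
    (hFeq : ∀ z ∉ cSeg m a b 1, Polynomial.aeval z Q ≠ 0 →
      F z = formGen m σ aP 0 z / Polynomial.aeval z Q)
    (hBound : BoundedWithOrder F N) :
    ∀ z ∉ cSeg m a b 1,
      F z = ∫ x, formGen m σ aP 1 (x : ℂ) /
        ((z - (x : ℂ)) * Polynomial.aeval (x : ℂ) Q) ∂(σ 1) := by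
  classical
  have h11 : (1 : ℕ) ≤ 1 := le_refl 1
  have h1m : (1 : ℕ) ≤ m := by omega
  haveI : IsFiniteMeasure (σ 1) := (hNik.2 1 h11 h1m).1
  set K : Set ℝ := Set.Icc (a 1) (b 1) with hKdef
  have hK0 : σ 1 Kᶜ = 0 := (hNik.2 1 h11 h1m).2.1
  have hKae : ∀ᵐ x ∂σ 1, x ∈ K := by
    rw [MeasureTheory.ae_iff]; simpa [Set.compl_def] using hK0
  have hab1 : a 1 < b 1 := hNik.1.1 1 h11 h1m
  have hKne : K.Nonempty := Set.nonempty_Icc.2 hab1.le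
  have hKcpt : IsCompact K := isCompact_Icc
  have hKc : cSeg m a b 1 = {w : ℂ | w.im = 0 ∧ a 1 ≤ w.re ∧ w.re ≤ b 1} := by
    rw [cSeg, if_pos ⟨h11, h1m⟩]
  have hmemKc : ∀ x : ℝ, x ∈ K ↔ ((x : ℝ) : ℂ) ∈ cSeg m a b 1 := by
    intro x
    rw [hKc, hKdef]
    simp [Set.mem_Icc, Complex.ofReal_im, Complex.ofReal_re]
  have hKcclosed : IsClosed (cSeg m a b 1) := by
    rw [hKc]
    have hset : {w : ℂ | w.im = 0 ∧ a 1 ≤ w.re ∧ w.re ≤ b 1}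
        = Complex.im ⁻¹' {0} ∩ Complex.re ⁻¹' Set.Icc (a 1) (b 1) := by
      ext w; simp [Set.mem_Icc, and_assoc]
    rw [hset]
    exact (isClosed_singleton.preimage Complex.continuous_im).inter
      (isClosed_Icc.preimage Complex.continuous_re)
  set Qb : Polynomial ℂ := Q.map (algebraMap ℝ ℂ) with hQbdef
  have hmap : ∀ (p : Polynomial ℝ) (z : ℂ),
      Polynomial.aeval z p = (p.map (algebraMap ℝ ℂ)).eval z := fun p z => by
    rw [Polynomial.aeval_def, Polynomial.eval_map]
  have haQ : ∀ z : ℂ, Polynomial.aeval z Q = Qb.eval z := fun z => hmap Q z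
  have hQbne : Qb ≠ 0 := (hQmonic.map _).ne_zero
  -- positive lower bound for |Qb| on K
  obtain ⟨x₀, hx₀K, hx₀min⟩ := hKcpt.exists_isMinOn hKne
    (((Polynomial.continuous Qb).norm.comp Complex.continuous_ofReal).continuousOn)
  have hc0 : 0 < ‖Qb.eval ((x₀ : ℝ) : ℂ)‖ := by
    rw [norm_pos_iff]
    intro h0
    exact (hQroots ((x₀ : ℝ) : ℂ) (by rw [haQ]; exact h0)) ((hmemKc x₀).1 hx₀K)
  set c : ℝ := ‖Qb.eval ((x₀ : ℝ) : ℂ)‖ with hcdef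
  have hQlb : ∀ x ∈ K, c ≤ ‖Qb.eval ((x : ℝ) : ℂ)‖ := fun x hx => hx₀min hx
  have hQne : ∀ x ∈ K, Qb.eval ((x : ℝ) : ℂ) ≠ 0 := fun x hx h0 => by
    have := hQlb x hx; rw [h0, norm_zero] at this; linarith
  -- the auxiliary functions g_k
  set gk : ℕ → ℝ → ℂ := fun k x => if 2 ≤ k ∧ k ≤ m then sHat σ 2 k ((x : ℝ) : ℂ)
      else if k = 1 then 1 else 0 with hgkdef
  have hnik := nik_meas_bound m a b σ hNik
  have hgk_eq : ∀ k, 2 ≤ k → k ≤ m → ∀ x : ℝ,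
      gk k x = nikAux σ (k - 2) 2 ((x : ℝ) : ℂ) := by
    intro k h2 hkm x
    have hcond : 2 ≤ k ∧ k ≤ m := ⟨h2, hkm⟩
    rw [hgkdef]
    simp only [if_pos hcond, sHat, if_pos h2]
  have hgk_meas : ∀ k, Measurable (gk k) := by
    intro k
    by_cases h2 : 2 ≤ k ∧ k ≤ m
    · have h := (hnik (k - 2) 2 le_rfl (by omega)).1
      have : gk k = fun x : ℝ => nikAux σ (k - 2) 2 ((x : ℝ) : ℂ) :=
        funext fun x => hgk_eq k h2.1 h2.2 x
      rw [this]; exact h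
    · by_cases h1 : k = 1
      · have : gk k = fun _ => (1 : ℂ) := by
          funext x; rw [hgkdef]; simp [if_neg h2, if_pos h1]
        rw [this]; exact measurable_const
      · have : gk k = fun _ => (0 : ℂ) := by
          funext x; rw [hgkdef]; simp [if_neg h2, if_neg h1]
        rw [this]; exact measurable_const
  have hgk_bd : ∀ k, ∃ M, 0 ≤ M ∧ ∀ x ∈ K, ‖gk k x‖ ≤ M := by
    intro k
    by_cases h2 : 2 ≤ k ∧ k ≤ m
    · obtain ⟨M, hM0, hM⟩ := (hnik (k - 2) 2 le_rfl (by omega)).2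
      refine ⟨M, hM0, fun x hx => ?_⟩
      rw [hgk_eq k h2.1 h2.2 x]
      have h21 : (2 : ℕ) - 1 = 1 := rfl
      rw [h21] at hM
      exact hM x hx
    · by_cases h1 : k = 1
      · refine ⟨1, zero_le_one, fun x hx => ?_⟩
        rw [hgkdef]; simp [if_neg h2, if_pos h1]
      · refine ⟨0, le_refl 0, fun x hx => ?_⟩
        rw [hgkdef]; simp [if_neg h2, if_neg h1]
  -- polynomial bounds on K
  have hpoly_bd : ∀ p : Polynomial ℂ, ∃ M, 0 ≤ M ∧ ∀ x ∈ K, ‖p.eval ((x : ℝ) : ℂ)‖ ≤ M := by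
    intro p
    obtain ⟨M, hM⟩ := hKcpt.exists_bound_of_continuousOn
      (((Polynomial.continuous p).comp Complex.continuous_ofReal).continuousOn)
    obtain ⟨y, hy⟩ := hKne
    exact ⟨M, (norm_nonneg _).trans (hM y hy), hM⟩
  -- W and WQ
  set W : ℝ → ℂ := fun x => formGen m σ aP 1 ((x : ℝ) : ℂ) with hWdef
  have hIcc_split : Finset.Icc 1 m = insert 1 (Finset.Icc 2 m) := by
    ext k; simp only [Finset.mem_Icc, Finset.mem_insert]; omega
  have h1notin : (1 : ℕ) ∉ Finset.Icc 2 m := by simp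
  have hWsum : ∀ x : ℝ, W x = ∑ k ∈ Finset.Icc 1 m,
      Polynomial.aeval ((x : ℝ) : ℂ) (aP k) * gk k x := by
    intro x
    rw [hIcc_split, Finset.sum_insert h1notin, hWdef]
    simp only [formGen]
    have hg1 : gk 1 x = 1 := by rw [hgkdef]; norm_num
    rw [hg1, mul_one]
    congr 1
    refine Finset.sum_congr rfl fun k hk => ?_
    rw [Finset.mem_Icc] at hk
    rw [hgkdef]
    simp only [if_pos (And.intro hk.1 hk.2)]
  have hW_meas : Measurable W := by
    have : W = fun x => ∑ k ∈ Finset.Icc 1 m,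
        Polynomial.aeval ((x : ℝ) : ℂ) (aP k) * gk k x := funext hWsum
    rw [this]
    refine Finset.measurable_sum _ fun k _ => Measurable.mul ?_ (hgk_meas k)
    have : (fun x : ℝ => Polynomial.aeval ((x : ℝ) : ℂ) (aP k))
        = fun x : ℝ => ((aP k).map (algebraMap ℝ ℂ)).eval ((x : ℝ) : ℂ) :=
      funext fun x => hmap _ _
    rw [this]
    exact ((Polynomial.continuous _).comp Complex.continuous_ofReal).measurable
  have hW_bd : ∃ M, 0 ≤ M ∧ ∀ x ∈ K, ‖W x‖ ≤ M := by
    have h := bdd_sum (Finset.Icc 1 m)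
      (fun k x => Polynomial.aeval ((x : ℝ) : ℂ) (aP k) * gk k x) K ?_
    · obtain ⟨M, hM0, hM⟩ := h
      exact ⟨M, hM0, fun x hx => by rw [hWsum x]; exact hM x hx⟩
    · intro k
      obtain ⟨Mp, hMp0, hMp⟩ := hpoly_bd ((aP k).map (algebraMap ℝ ℂ))
      obtain ⟨Mg, hMg0, hMg⟩ := hgk_bd k
      refine ⟨Mp * Mg, mul_nonneg hMp0 hMg0, fun x hx _ => ?_⟩
      rw [norm_mul, hmap]
      exact mul_le_mul (hMp x hx) (hMg x hx) (norm_nonneg _) hMp0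
  obtain ⟨MW, hMW0, hMW⟩ := hW_bd
  set WQ : ℝ → ℂ := fun x => W x / Qb.eval ((x : ℝ) : ℂ) with hWQdef
  have hWQ_meas : Measurable WQ :=
    hW_meas.div (((Polynomial.continuous Qb).comp Complex.continuous_ofReal).measurable)
  set MWQ : ℝ := MW / c with hMWQdef
  have hMWQ0 : 0 ≤ MWQ := div_nonneg hMW0 hc0.le
  have hWQ_bd : ∀ x ∈ K, ‖WQ x‖ ≤ MWQ := by
    intro x hx
    rw [hWQdef]
    simp only [norm_div]
    exact div_le_div₀ hMW0 (hMW x hx) hc0 (hQlb x hx)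
  -- integrability helper
  have hInt : ∀ f : ℝ → ℂ, Measurable f → ∀ M : ℝ, (∀ x ∈ K, ‖f x‖ ≤ M) →
      Integrable f (σ 1) := fun f hf M hM =>
    integrable_of_bound' (σ 1) K hK0 f hf.aestronglyMeasurable M hM
  -- power integrability
  set R0 : ℝ := max |a 1| |b 1| with hR0def
  have habsK : ∀ x ∈ K, |x| ≤ R0 := by
    intro x hx
    rw [abs_le]
    constructor
    · have := neg_abs_le (a 1)
      have := le_max_left |a 1| |b 1|
      have := hx.1
      simp only [hR0def]; push_cast; linarith [hx.1, neg_abs_le (a 1), le_max_left |a 1| |b 1|]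
    · have := le_abs_self (b 1)
      simp only [hR0def]; linarith [hx.2, le_abs_self (b 1), le_max_right |a 1| |b 1|]
  have hpow_bd : ∀ (e : ℕ) (x : ℝ), x ∈ K → ‖((x : ℝ) : ℂ) ^ e‖ ≤ R0 ^ e := by
    intro e x hx
    rw [norm_pow, Complex.norm_real, Real.norm_eq_abs]
    exact pow_le_pow_left₀ (abs_nonneg x) (habsK x hx) e
  have hint_mul : ∀ w : ℝ → ℂ, Measurable w → ∀ Mw : ℝ, 0 ≤ Mw → (∀ x ∈ K, ‖w x‖ ≤ Mw) →
      ∀ e : ℕ, Integrable (fun x : ℝ => ((x : ℝ) : ℂ) ^ e * w x) (σ 1) := by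
    intro w hw Mw hMw0 hMw e
    refine hInt _ ((Complex.measurable_ofReal.pow_const e).mul hw) (R0 ^ e * Mw) fun x hx => ?_
    rw [norm_mul]
    exact mul_le_mul (hpow_bd e x hx) (hMw x hx) (norm_nonneg _) (by positivity)
  -- the polynomials collecting the lower order terms
  obtain ⟨PQ, hPQ⟩ := exists_poly_integral (σ 1) Qb WQ
    (hint_mul WQ hWQ_meas MWQ hMWQ0 hWQ_bd)
  have hPkex : ∀ k : ℕ, ∃ P : Polynomial ℂ, ∀ z : ℂ,
      ∫ x, divS ((aP k).map (algebraMap ℝ ℂ)) z ((x : ℝ) : ℂ) * gk k x ∂σ 1 = P.eval z := by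
    intro k
    obtain ⟨Mg, hMg0, hMg⟩ := hgk_bd k
    exact exists_poly_integral (σ 1) _ (gk k) (hint_mul (gk k) (hgk_meas k) Mg hMg0 hMg)
  choose Pk hPk using hPkex
  set Ptot : Polynomial ℂ := (aP 0).map (algebraMap ℝ ℂ) - PQ + ∑ k ∈ Finset.Icc 1 m, Pk k
    with hPtotdef
  -- G
  set G : ℂ → ℂ := fun z => ∫ x, WQ x * (z - ((x : ℝ) : ℂ))⁻¹ ∂σ 1 with hGdef
  -- distance to K
  have hzlb : ∀ z ∉ cSeg m a b 1, ∃ ε > 0, ∀ x ∈ K, ε ≤ ‖z - ((x : ℝ) : ℂ)‖ := by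
    intro z hz
    obtain ⟨ε, hε, hball⟩ := Metric.isOpen_iff.1 hKcclosed.isOpen_compl z hz
    refine ⟨ε, hε, fun x hx => ?_⟩
    by_contra hcon
    push_neg at hcon
    have hmem : ((x : ℝ) : ℂ) ∈ Metric.ball z ε := by
      rw [Metric.mem_ball, dist_comm, dist_eq_norm]
      exact hcon
    exact (hball hmem) ((hmemKc x).1 hx)
  -- sHat as an integral against gk
  have hshat : ∀ k, 1 ≤ k → k ≤ m → ∀ z : ℂ,
      sHat σ 1 k z = ∫ x, gk k x * (z - ((x : ℝ) : ℂ))⁻¹ ∂σ 1 := by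
    intro k hk1 hkm z
    rcases eq_or_lt_of_le hk1 with h1 | h2
    · have hk1' : k = 1 := h1.symm
      subst hk1'
      have h0 : sHat σ 1 1 z = ∫ x, (z - ((x : ℝ) : ℂ))⁻¹ ∂σ 1 := by
        simp [sHat, nikAux, cauchyT]
      rw [h0]
      refine integral_congr_ae (Filter.Eventually.of_forall fun x => ?_)
      have hg1 : gk 1 x = 1 := by rw [hgkdef]; norm_num
      simp only [hg1, one_mul]
    · have hk2 : 2 ≤ k := h2
      have hg : k - 1 = (k - 2) + 1 := by omega
      have h0 : sHat σ 1 k z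
          = ∫ x, nikAux σ (k - 2) 2 ((x : ℝ) : ℂ) / (z - ((x : ℝ) : ℂ)) ∂σ 1 := by
        simp only [sHat, if_pos hk1, hg]
        simp only [nikAux]
      rw [h0]
      refine integral_congr_ae (Filter.Eventually.of_forall fun x => ?_)
      simp only [hgk_eq k hk2 hkm, div_eq_mul_inv]
  -- differentiability of G off the segment
  have hG_diff : ∀ z₀ ∉ cSeg m a b 1, DifferentiableAt ℂ G z₀ := by
    intro z₀ hz₀
    obtain ⟨ε, hε, hεle⟩ := hzlb z₀ hz₀
    have hr : (0 : ℝ) < ε / 2 := by linarith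
    have hmeasz : ∀ z : ℂ, Measurable fun x : ℝ => WQ x * (z - ((x : ℝ) : ℂ))⁻¹ := fun z =>
      hWQ_meas.mul ((measurable_const.sub Complex.measurable_ofReal).inv)
    have key := hasDerivAt_integral_of_dominated_loc_of_deriv_le (μ := σ 1)
      (F := fun z x => WQ x * (z - ((x : ℝ) : ℂ))⁻¹)
      (F' := fun z x => WQ x * (-1 / (z - ((x : ℝ) : ℂ)) ^ 2))
      (x₀ := z₀) (bound := fun _ => MWQ * (1 / (ε / 2) ^ 2)) (s := Metric.ball z₀ (ε / 2)) (Metric.ball_mem_nhds z₀ hr)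
      (Filter.Eventually.of_forall fun z => (hmeasz z).aestronglyMeasurable)
      ?_ ?_ ?_ (integrable_const _) ?_
    · exact key.2.differentiableAt
    · refine hInt _ (hmeasz z₀) (MWQ * ε⁻¹) fun x hx => ?_
      rw [norm_mul, norm_inv]
      refine mul_le_mul (hWQ_bd x hx) (inv_anti₀ hε (hεle x hx)) ?_ hMWQ0
      positivity
    · exact (hWQ_meas.mul ((measurable_const.div
        (((measurable_const.sub Complex.measurable_ofReal).pow_const 2))))).aestronglyMeasurable
    · refine hKae.mono fun x hx => fun z hz => ?_
      have hlow : ε / 2 ≤ ‖z - ((x : ℝ) : ℂ)‖ := by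
        have h1 : ‖z₀ - ((x : ℝ) : ℂ)‖ - ‖z₀ - z‖ ≤ ‖z - ((x : ℝ) : ℂ)‖ := by
          have h2 := norm_sub_norm_le (z₀ - ((x : ℝ) : ℂ)) (z₀ - z)
          have h3 : z₀ - ((x : ℝ) : ℂ) - (z₀ - z) = z - ((x : ℝ) : ℂ) := by ring
          rwa [h3] at h2
        have h4 : ‖z₀ - z‖ < ε / 2 := by
          rw [Metric.mem_ball, dist_eq_norm] at hz
          rw [norm_sub_rev]
          exact hz
        have h5 := hεle x hx
        linarith
      change ‖WQ x * (-1 / (z - ((x : ℝ) : ℂ)) ^ 2)‖ ≤ MWQ * (1 / (ε / 2) ^ 2)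
      rw [norm_mul]
      have hnn : ‖(-1 : ℂ) / (z - ((x : ℝ) : ℂ)) ^ 2‖ = 1 / ‖z - ((x : ℝ) : ℂ)‖ ^ 2 := by
        rw [norm_div, norm_neg, norm_one, norm_pow]
      rw [hnn]
      refine mul_le_mul (hWQ_bd x hx) ?_ (by positivity) hMWQ0
      exact one_div_le_one_div_of_le (by positivity) (by nlinarith [hlow, hr.le])
    · refine hKae.mono fun x hx => fun z hz => ?_
      have hlow : ε / 2 ≤ ‖z - ((x : ℝ) : ℂ)‖ := by
        have h1 : ‖z₀ - ((x : ℝ) : ℂ)‖ - ‖z₀ - z‖ ≤ ‖z - ((x : ℝ) : ℂ)‖ := by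
          have h2 := norm_sub_norm_le (z₀ - ((x : ℝ) : ℂ)) (z₀ - z)
          have h3 : z₀ - ((x : ℝ) : ℂ) - (z₀ - z) = z - ((x : ℝ) : ℂ) := by ring
          rwa [h3] at h2
        have h4 : ‖z₀ - z‖ < ε / 2 := by
          rw [Metric.mem_ball, dist_eq_norm] at hz
          rw [norm_sub_rev]
          exact hz
        have h5 := hεle x hx
        linarith
      have hne : z - ((x : ℝ) : ℂ) ≠ 0 := by
        intro h0
        rw [h0, norm_zero] at hlow
        linarith
      have hd : HasDerivAt (fun w : ℂ => (w - ((x : ℝ) : ℂ))⁻¹)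
          (-1 / (z - ((x : ℝ) : ℂ)) ^ 2) z := by
        have := ((hasDerivAt_id z).sub_const ((x : ℝ) : ℂ)).fun_inv hne
        simpa using this
      exact hd.const_mul (WQ x)
  have hG_cont : ContinuousOn G (cSeg m a b 1)ᶜ := fun z hz =>
    ((hG_diff z hz).continuousAt).continuousWithinAt
  -- the central identity
  have hIdent : ∀ z, z ∉ cSeg m a b 1 → Qb.eval z ≠ 0 →
      Qb.eval z * (F z - G z) = Ptot.eval z := by
    intro z hz hQz
    obtain ⟨ε, hε, hεle⟩ := hzlb z hz
    have hzx : ∀ x ∈ K, z - ((x : ℝ) : ℂ) ≠ 0 := by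
      intro x hx h0
      have := hεle x hx
      rw [h0, norm_zero] at this
      linarith
    have hMeas_inv : Measurable fun x : ℝ => (z - ((x : ℝ) : ℂ))⁻¹ :=
      (measurable_const.sub Complex.measurable_ofReal).inv
    have hbound_inv : ∀ x ∈ K, ‖(z - ((x : ℝ) : ℂ))⁻¹‖ ≤ ε⁻¹ := fun x hx => by
      rw [norm_inv]; exact inv_anti₀ hε (hεle x hx)
    have hdivS_bd : ∀ p : Polynomial ℂ, ∃ M, 0 ≤ M ∧
        ∀ x ∈ K, ‖divS p z ((x : ℝ) : ℂ)‖ ≤ M := by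
      intro p
      obtain ⟨M, hM⟩ := hKcpt.exists_bound_of_continuousOn (continuous_divS p z).continuousOn
      obtain ⟨y, hy⟩ := hKne
      exact ⟨M, (norm_nonneg _).trans (hM y hy), hM⟩
    have hdivS_meas : ∀ p : Polynomial ℂ, Measurable fun x : ℝ => divS p z ((x : ℝ) : ℂ) :=
      fun p => (continuous_divS p z).measurable
    -- integrabilities
    have hI3 : Integrable (fun x => divS Qb z ((x : ℝ) : ℂ) * WQ x) (σ 1) := by
      obtain ⟨M, hM0, hM⟩ := hdivS_bd Qb
      refine hInt _ ((hdivS_meas Qb).mul hWQ_meas) (M * MWQ) fun x hx => ?_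
      rw [norm_mul]
      exact mul_le_mul (hM x hx) (hWQ_bd x hx) (norm_nonneg _) hM0
    have hI2 : ∀ k, Integrable
        (fun x => divS ((aP k).map (algebraMap ℝ ℂ)) z ((x : ℝ) : ℂ) * gk k x) (σ 1) := by
      intro k
      obtain ⟨M, hM0, hM⟩ := hdivS_bd ((aP k).map (algebraMap ℝ ℂ))
      obtain ⟨Mg, hMg0, hMg⟩ := hgk_bd k
      refine hInt _ ((hdivS_meas _).mul (hgk_meas k)) (M * Mg) fun x hx => ?_
      rw [norm_mul]
      exact mul_le_mul (hM x hx) (hMg x hx) (norm_nonneg _) hM0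
    have hI6 : ∀ k, Integrable (fun x => gk k x * (z - ((x : ℝ) : ℂ))⁻¹) (σ 1) := by
      intro k
      obtain ⟨Mg, hMg0, hMg⟩ := hgk_bd k
      refine hInt _ ((hgk_meas k).mul hMeas_inv) (Mg * ε⁻¹) fun x hx => ?_
      rw [norm_mul]
      exact mul_le_mul (hMg x hx) (hbound_inv x hx) (norm_nonneg _) hMg0
    have hI1 : ∀ k, Integrable
        (fun x => Polynomial.aeval ((x : ℝ) : ℂ) (aP k) * gk k x * (z - ((x : ℝ) : ℂ))⁻¹)
        (σ 1) := by
      intro k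
      obtain ⟨Mp, hMp0, hMp⟩ := hpoly_bd ((aP k).map (algebraMap ℝ ℂ))
      obtain ⟨Mg, hMg0, hMg⟩ := hgk_bd k
      have hpm : Measurable fun x : ℝ => Polynomial.aeval ((x : ℝ) : ℂ) (aP k) := by
        have : (fun x : ℝ => Polynomial.aeval ((x : ℝ) : ℂ) (aP k))
            = fun x : ℝ => ((aP k).map (algebraMap ℝ ℂ)).eval ((x : ℝ) : ℂ) :=
          funext fun x => hmap _ _
        rw [this]
        exact ((Polynomial.continuous _).comp Complex.continuous_ofReal).measurable
      refine hInt _ ((hpm.mul (hgk_meas k)).mul hMeas_inv) (Mp * Mg * ε⁻¹) fun x hx => ?_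
      rw [norm_mul, norm_mul, hmap]
      refine mul_le_mul (mul_le_mul (hMp x hx) (hMg x hx) (norm_nonneg _) hMp0)
        (hbound_inv x hx) (norm_nonneg _) (mul_nonneg hMp0 hMg0)
    have hI4 : Integrable (fun x => W x * (z - ((x : ℝ) : ℂ))⁻¹) (σ 1) := by
      refine hInt _ (hW_meas.mul hMeas_inv) (MW * ε⁻¹) fun x hx => ?_
      rw [norm_mul]
      exact mul_le_mul (hMW x hx) (hbound_inv x hx) (norm_nonneg _) hMW0
    -- step 1 : Qb(z) * G z
    have hstep1 : Qb.eval z * G z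
        = ∫ x, (divS Qb z ((x : ℝ) : ℂ) * WQ x + W x * (z - ((x : ℝ) : ℂ))⁻¹) ∂σ 1 := by
      rw [hGdef]
      simp only
      rw [← integral_const_mul]
      refine integral_congr_ae (hKae.mono fun x hx => ?_)
      have h1 : Qb.eval z = (z - ((x : ℝ) : ℂ)) * divS Qb z ((x : ℝ) : ℂ)
          + Qb.eval ((x : ℝ) : ℂ) := by
        have h0 := divS_mul Qb z ((x : ℝ) : ℂ)
        linear_combination -h0
      have h2 := hQne x hx
      have h3 := hzx x hx
      rw [h1, hWQdef]
      simp only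
      field_simp
    -- step 2 : compute the integral
    have hstep2 : ∫ x, (divS Qb z ((x : ℝ) : ℂ) * WQ x + W x * (z - ((x : ℝ) : ℂ))⁻¹) ∂σ 1
        = PQ.eval z + ∑ k ∈ Finset.Icc 1 m,
            (Polynomial.aeval z (aP k) * sHat σ 1 k z - (Pk k).eval z) := by
      rw [integral_add hI3 hI4, hPQ z]
      congr 1
      have hWrw : (fun x => W x * (z - ((x : ℝ) : ℂ))⁻¹)
          = fun x => ∑ k ∈ Finset.Icc 1 m,
              Polynomial.aeval ((x : ℝ) : ℂ) (aP k) * gk k x * (z - ((x : ℝ) : ℂ))⁻¹ := by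
        funext x
        rw [hWsum x, Finset.sum_mul]
      rw [hWrw, integral_finset_sum _ fun k _ => hI1 k]
      refine Finset.sum_congr rfl fun k hk => ?_
      rw [Finset.mem_Icc] at hk
      have hptw : ∀ᵐ x ∂σ 1, Polynomial.aeval ((x : ℝ) : ℂ) (aP k) * gk k x
            * (z - ((x : ℝ) : ℂ))⁻¹
          = ((aP k).map (algebraMap ℝ ℂ)).eval z * (gk k x * (z - ((x : ℝ) : ℂ))⁻¹)
            - divS ((aP k).map (algebraMap ℝ ℂ)) z ((x : ℝ) : ℂ) * gk k x := by
        refine hKae.mono fun x hx => ?_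
        have h1 : ((aP k).map (algebraMap ℝ ℂ)).eval ((x : ℝ) : ℂ)
            = ((aP k).map (algebraMap ℝ ℂ)).eval z
              - (z - ((x : ℝ) : ℂ)) * divS ((aP k).map (algebraMap ℝ ℂ)) z ((x : ℝ) : ℂ) := by
          have h0 := divS_mul ((aP k).map (algebraMap ℝ ℂ)) z ((x : ℝ) : ℂ)
          linear_combination h0
        have h3 := hzx x hx
        rw [hmap, h1]
        field_simp
      rw [integral_congr_ae hptw, integral_sub ((hI6 k).const_mul _) (hI2 k),
        integral_const_mul, hPk k z, hshat k hk.1 hk.2 z, hmap]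
    -- step 3 : Qb(z) * F z
    have hFz : Qb.eval z * F z = Polynomial.aeval z (aP 0)
        + ∑ k ∈ Finset.Icc 1 m, Polynomial.aeval z (aP k) * sHat σ 1 k z := by
      rw [hFeq z hz (by rw [haQ]; exact hQz), haQ, mul_div_cancel₀ _ hQz]
      norm_num [formGen]
    rw [mul_sub, hFz, hstep1, hstep2, hPtotdef]
    rw [Finset.sum_sub_distrib]
    simp only [Polynomial.eval_add, Polynomial.eval_sub, Polynomial.eval_finset_sum]
    rw [hmap (aP 0) z]
    ring
  -- gcd business
  set d : Polynomial ℂ := EuclideanDomain.gcd Ptot Qb with hddef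
  have hdP : d ∣ Ptot := EuclideanDomain.gcd_dvd_left _ _
  have hdQ : d ∣ Qb := EuclideanDomain.gcd_dvd_right _ _
  have hdne : d ≠ 0 := by
    intro h0
    rw [hddef] at h0
    exact hQbne (EuclideanDomain.gcd_eq_zero_iff.1 h0).2
  obtain ⟨P', hP'⟩ := hdP
  obtain ⟨Q', hQ'⟩ := hdQ
  have hbez : (1 : Polynomial ℂ)
      = P' * EuclideanDomain.gcdA Ptot Qb + Q' * EuclideanDomain.gcdB Ptot Qb := by
    have h := EuclideanDomain.gcd_eq_gcd_ab Ptot Qb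
    apply mul_left_cancel₀ hdne
    rw [mul_one]
    calc d = Ptot * EuclideanDomain.gcdA Ptot Qb + Qb * EuclideanDomain.gcdB Ptot Qb := h
      _ = d * (P' * EuclideanDomain.gcdA Ptot Qb + Q' * EuclideanDomain.gcdB Ptot Qb) := by
          rw [hP', hQ']; ring
  have hid2 : ∀ z, z ∉ cSeg m a b 1 → Qb.eval z ≠ 0 →
      Q'.eval z * (F z - G z) - P'.eval z = 0 := by
    intro z hz hQz
    have h := hIdent z hz hQz
    rw [hP', hQ', Polynomial.eval_mul, Polynomial.eval_mul] at h
    have hdz : d.eval z ≠ 0 := by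
      intro h0
      apply hQz
      rw [hQ', Polynomial.eval_mul, h0, zero_mul]
    have h2 : d.eval z * (Q'.eval z * (F z - G z) - P'.eval z) = 0 := by
      linear_combination h
    rcases mul_eq_zero.1 h2 with h3 | h3
    · exact absurd h3 hdz
    · exact h3
  have hroots : {z : ℂ | Qb.IsRoot z}.Finite := Polynomial.finite_setOf_isRoot hQbne
  have hFGc : ContinuousOn (fun z => Q'.eval z * (F z - G z) - P'.eval z)
      (cSeg m a b 1)ᶜ := by
    refine ContinuousOn.sub ?_ (Polynomial.continuous P').continuousOn
    exact (Polynomial.continuous Q').continuousOn.mul (hF.continuousOn.sub hG_cont)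
  have hid3 : ∀ z ∈ (cSeg m a b 1)ᶜ, Q'.eval z * (F z - G z) - P'.eval z = 0 := by
    refine eqzero_of_eq_off_finite hKcclosed.isOpen_compl hroots hFGc fun z hz hzr => ?_
    exact hid2 z hz fun h0 => hzr h0
  -- Q' is a nonzero constant
  have hQ'deg : Q'.degree ≤ 0 := by
    by_contra hdeg
    push_neg at hdeg
    obtain ⟨z₀, hz₀⟩ := Complex.exists_root hdeg
    have hQbz : Qb.eval z₀ = 0 := by
      rw [hQ', Polynomial.eval_mul, hz₀, mul_zero]
    have hz₀Ω : z₀ ∉ cSeg m a b 1 := hQroots z₀ (by rw [haQ]; exact hQbz)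
    have h3 := hid3 z₀ hz₀Ω
    rw [hz₀] at h3
    have hP'z : P'.eval z₀ = 0 := by simpa using h3
    have hz₀' : Polynomial.eval z₀ Q' = 0 := hz₀
    have h4 := congrArg (Polynomial.eval z₀) hbez
    simp [Polynomial.eval_add, Polynomial.eval_mul, hP'z, hz₀'] at h4
  set cst : ℂ := Q'.coeff 0 with hcstdef
  have hQ'C : Q' = Polynomial.C cst := Polynomial.eq_C_of_degree_le_zero hQ'deg
  have hcst : cst ≠ 0 := by
    intro h0
    apply hQbne
    rw [hQ', hQ'C, h0, map_zero, mul_zero]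
  -- limits at infinity
  have hbig : ∀ᶠ x : ℝ in atTop, ((x : ℝ) : ℂ) ∉ cSeg m a b 1 := by
    filter_upwards [eventually_gt_atTop (b 1)] with x hx
    rw [hKc]
    rintro ⟨-, -, h3⟩
    rw [Complex.ofReal_re] at h3
    linarith
  obtain ⟨C, R, hCR⟩ := hBound
  have hC0 : 0 ≤ C := by
    refine le_trans (norm_nonneg _) (hCR ((|R| + 1 : ℝ) : ℂ) ?_)
    rw [Complex.norm_real, Real.norm_eq_abs, abs_of_pos (by positivity)]
    linarith [le_abs_self R]
  have hFlim : Tendsto (fun x : ℝ => F ((x : ℝ) : ℂ)) atTop (𝓝 0) := by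
    rw [tendsto_zero_iff_norm_tendsto_zero]
    refine squeeze_zero' (g := fun x : ℝ => C / x) (Filter.Eventually.of_forall fun x => norm_nonneg _) ?_ ?_
    · filter_upwards [eventually_ge_atTop (max R 1)] with x hx
      have hx1 : (1 : ℝ) ≤ x := le_trans (le_max_right _ _) hx
      have hxR : R ≤ x := le_trans (le_max_left _ _) hx
      have hxpos : (0 : ℝ) < x := lt_of_lt_of_le one_pos hx1
      have habs : ‖((x : ℝ) : ℂ)‖ = x := by
        rw [Complex.norm_real, Real.norm_eq_abs, abs_of_pos hxpos]
      have h := hCR ((x : ℝ) : ℂ) (by rw [habs]; exact hxR)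
      rw [norm_mul, norm_pow, habs] at h
      rw [le_div_iff₀ hxpos]
      have hxN : x ≤ x ^ N := by
        calc x = x ^ 1 := (pow_one x).symm
          _ ≤ x ^ N := pow_le_pow_right₀ hx1 hN
      calc ‖F ((x : ℝ) : ℂ)‖ * x ≤ ‖F ((x : ℝ) : ℂ)‖ * x ^ N := by
            exact mul_le_mul_of_nonneg_left hxN (norm_nonneg _)
        _ = x ^ N * ‖F ((x : ℝ) : ℂ)‖ := mul_comm _ _
        _ ≤ C := h
    · exact Tendsto.div_atTop tendsto_const_nhds tendsto_id
  have hT0 : (0 : ℝ) ≤ (σ 1 Set.univ).toReal := ENNReal.toReal_nonneg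
  have hGlim : Tendsto (fun x : ℝ => G ((x : ℝ) : ℂ)) atTop (𝓝 0) := by
    rw [tendsto_zero_iff_norm_tendsto_zero]
    refine squeeze_zero' (g := fun x : ℝ => MWQ * (x - b 1)⁻¹ * (σ 1 Set.univ).toReal) (Filter.Eventually.of_forall fun x => norm_nonneg _) ?_ ?_
    · filter_upwards [eventually_gt_atTop (b 1)] with x hx
      rw [hGdef]
      simp only
      refine norm_integral_le_of_norm_le_const (C := MWQ * (x - b 1)⁻¹)
        (hKae.mono fun t ht => ?_)
      rw [norm_mul, norm_inv]
      have h1 : ((x : ℝ) : ℂ) - ((t : ℝ) : ℂ) = (((x - t : ℝ)) : ℂ) := by push_cast; ring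
      have h2 : x - b 1 ≤ |x - t| := by
        rw [abs_of_nonneg (by linarith [ht.2])]
        linarith [ht.2]
      rw [h1, Complex.norm_real, Real.norm_eq_abs]
      exact mul_le_mul (hWQ_bd t ht) (inv_anti₀ (by linarith) h2) (by positivity) hMWQ0
    · have h1 : Tendsto (fun x : ℝ => (x - b 1)⁻¹) atTop (𝓝 0) := by
        refine Tendsto.comp tendsto_inv_atTop_zero ?_
        exact tendsto_atTop_add_const_right atTop (-(b 1))
          tendsto_id |>.congr fun x => by simp only [id_eq]; ring
      have h2 : Tendsto (fun x : ℝ => MWQ * (x - b 1)⁻¹ * (σ 1 Set.univ).toReal)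
          atTop (𝓝 (MWQ * 0 * (σ 1 Set.univ).toReal)) :=
        (h1.const_mul MWQ).mul_const _
      simpa using h2
  have hclose : ∀ᶠ x : ℝ in atTop, P'.eval ((x : ℝ) : ℂ)
      = cst * (F ((x : ℝ) : ℂ) - G ((x : ℝ) : ℂ)) := by
    filter_upwards [hbig] with x hx
    have h := hid3 _ hx
    rw [hQ'C, Polynomial.eval_C] at h
    exact (sub_eq_zero.1 h).symm
  have hP'0 : P' = 0 := by
    apply poly_eq_zero_of_tendsto
    refine Filter.Tendsto.congr' (hclose.mono fun x hx => hx.symm) ?_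
    have := (hFlim.sub hGlim).const_mul cst
    simpa using this
  -- conclusion
  intro z hz
  have h := hid3 z hz
  rw [hQ'C, Polynomial.eval_C, hP'0, Polynomial.eval_zero, sub_zero] at h
  have hFG : F z = G z := by
    rcases mul_eq_zero.1 h with h3 | h3
    · exact absurd h3 hcst
    · exact sub_eq_zero.1 h3
  rw [hFG, hGdef]
  refine integral_congr_ae (Filter.Eventually.of_forall fun x => ?_)
  show formGen m σ aP 1 ((x : ℝ) : ℂ) / Qb.eval ((x : ℝ) : ℂ) * (z - ((x : ℝ) : ℂ))⁻¹
      = formGen m σ aP 1 ((x : ℝ) : ℂ) / ((z - ((x : ℝ) : ℂ)) * Polynomial.aeval ((x : ℝ) : ℂ) Q)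
  rw [haQ]
  rw [div_eq_mul_inv, div_eq_mul_inv, mul_inv]
  ring
end

section
/- Let 0 ≤ j ≤ m−1 and let a_{j+1},…,a_m be real polynomials. Define Ã_{j+1} := (−1)^{j+1} a_{j+1} + Σ_{k=j+2}^m (−1)^k a_k ŝ_{j+2,k} on ℂ∖Δ_{j+2}, and Ã_j(z) := ∫ Ã_{j+1}(x)/(z−x) dσ_{j+1}(x) for z ∈ ℂ∖Δ_{j+1}. Then Ã_j(z) = (−1)^j a_j(z) + Σ_{k=j+1}^m (−1)^k a_k(z) ŝ_{j+1,k}(z) for all z ∈ ℂ∖Δ_{j+1}, where a_j(z) := ∫ (a_{j+1}(z) − a_{j+1}(x))/(z−x) dσ_{j+1}(x) + Σ_{k=j+2}^m (−1)^{k−j+1} ∫ (a_k(z) − a_k(x))/(z−x) · ŝ_{j+2,k}(x) dσ_{j+1}(x) is a real polynomial with deg a_j ≤ (max_{j+1 ≤ k ≤ m} deg a_k) − 1. -/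
open MeasureTheory Filter Topology

noncomputable section

namespace NikL

lemma exists_eps {A B : ℝ} {z : ℂ} (hz : ∀ x ∈ Set.Icc A B, z ≠ (x : ℂ)) :
    ∃ ε > 0, ∀ x ∈ Set.Icc A B, ε ≤ ‖z - (x : ℂ)‖ := by
  by_cases hne : (Set.Icc A B).Nonempty
  · set T : Set ℂ := Complex.ofReal '' Set.Icc A B with hT
    have hTc : IsCompact T := isCompact_Icc.image Complex.continuous_ofReal
    have hTne : T.Nonempty := hne.image _
    have hzT : z ∉ T := by rintro ⟨x, hx, rfl⟩; exact hz x hx rfl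
    have hpos : 0 < Metric.infDist z T := (hTc.isClosed.notMem_iff_infDist_pos hTne).1 hzT
    refine ⟨Metric.infDist z T, hpos, fun x hx => ?_⟩
    have h1 : Metric.infDist z T ≤ dist z (x:ℂ) := Metric.infDist_le_dist_of_mem ⟨x, hx, rfl⟩
    simpa [dist_eq_norm] using h1
  · exact ⟨1, one_pos, fun x hx => absurd ⟨x, hx⟩ hne⟩

lemma ae_mem {μ : Measure ℝ} {s : Set ℝ} (hμ : μ sᶜ = 0) : ∀ᵐ x ∂μ, x ∈ s := by
  rw [ae_iff]
  simpa [Set.compl_def] using hμ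

lemma integrable_of_bound {μ : Measure ℝ} [IsFiniteMeasure μ] {s : Set ℝ} (hμ : μ sᶜ = 0)
    {f : ℝ → ℂ} (hf : AEStronglyMeasurable f μ) {C : ℝ} (hC : ∀ x ∈ s, ‖f x‖ ≤ C) :
    Integrable f μ := by
  refine (integrable_const C).mono' hf ?_
  filter_upwards [ae_mem hμ] with x hx using hC x hx

lemma aesm_of_contOn {μ : Measure ℝ} {A B : ℝ} (hμ : μ (Set.Icc A B)ᶜ = 0)
    {f : ℝ → ℂ} (hf : ContinuousOn f (Set.Icc A B)) : AEStronglyMeasurable f μ := by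
  have h := hf.aestronglyMeasurable (μ := μ) measurableSet_Icc
  rwa [Measure.restrict_eq_self_of_ae_mem (ae_mem hμ)] at h

lemma integrable_div_of_bound {μ : Measure ℝ} [IsFiniteMeasure μ] {A B : ℝ}
    (hμ : μ (Set.Icc A B)ᶜ = 0)
    {f : ℝ → ℂ} (hf : AEStronglyMeasurable f μ) {C : ℝ} (hC : ∀ x ∈ Set.Icc A B, ‖f x‖ ≤ C)
    {z : ℂ} (hz : ∀ x ∈ Set.Icc A B, z ≠ (x : ℂ)) :
    Integrable (fun x => f x / (z - (x:ℂ))) μ := by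
  obtain ⟨ε, hε, hεle⟩ := exists_eps hz
  refine integrable_of_bound hμ
    ?_ (C := |C| / ε) fun x hx => ?_
  · have h : AEStronglyMeasurable (fun x : ℝ => f x * (z - (x:ℂ))⁻¹) μ :=
      hf.mul ((measurable_const.sub Complex.measurable_ofReal).inv).aestronglyMeasurable
    simpa [div_eq_mul_inv] using h
  rw [norm_div]
  exact div_le_div₀ (abs_nonneg C) ((hC x hx).trans (le_abs_self C)) hε (hεle x hx)

lemma contOn_cauchy (μ : Measure ℝ) [IsFiniteMeasure μ] (A B : ℝ)
    (hμ : μ (Set.Icc A B)ᶜ = 0)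
    (f : ℝ → ℂ) (hf : AEStronglyMeasurable f μ) (Mf : ℝ)
    (hMf : ∀ x ∈ Set.Icc A B, ‖f x‖ ≤ Mf) :
    ContinuousOn (fun z => ∫ x, f x / (z - (x:ℂ)) ∂μ)
      {z : ℂ | ∀ x ∈ Set.Icc A B, z ≠ (x:ℂ)} := by
  intro z₀ hz₀
  obtain ⟨ε, hε, hεle⟩ := exists_eps hz₀
  refine (continuousAt_of_dominated (bound := fun _ => |Mf| / (ε/2)) ?_ ?_ ?_ ?_).continuousWithinAt
  · refine Eventually.of_forall fun z => ?_
    have h : AEStronglyMeasurable (fun x : ℝ => f x * (z - (x:ℂ))⁻¹) μ :=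
      hf.mul ((measurable_const.sub Complex.measurable_ofReal).inv).aestronglyMeasurable
    simpa [div_eq_mul_inv] using h
  · filter_upwards [Metric.ball_mem_nhds z₀ (by positivity : (0:ℝ) < ε/2)] with z hzball
    filter_upwards [ae_mem hμ] with x hx
    have h1 : ε ≤ ‖z₀ - (x:ℂ)‖ := hεle x hx
    have h2 : ‖z₀ - z‖ < ε/2 := by
      rw [Metric.mem_ball] at hzball
      simpa [dist_eq_norm, norm_sub_rev] using hzball
    have h3 : ‖z₀ - (x:ℂ)‖ - ‖z₀ - z‖ ≤ ‖z - (x:ℂ)‖ := by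
      have := norm_sub_norm_le (z₀ - (x:ℂ)) (z₀ - z)
      simpa [sub_sub_sub_cancel_left] using this
    rw [norm_div]
    exact div_le_div₀ (abs_nonneg Mf) ((hMf x hx).trans (le_abs_self Mf)) (by positivity)
      (by linarith)
  · exact integrable_const _
  · filter_upwards [ae_mem hμ] with x hx
    exact ContinuousAt.div continuousAt_const
      ((continuous_id.sub continuous_const).continuousAt)
      (sub_ne_zero.2 (hz₀ x hx))

lemma nikAux_contOn (m : ℕ) (a b : ℕ → ℝ) (σ : ℕ → Measure ℝ) (hNik : NikishinData m a b σ) :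
    ∀ g i, 1 ≤ i → i + g ≤ m →
      ContinuousOn (nikAux σ g i) {z : ℂ | ∀ x ∈ Set.Icc (a i) (b i), z ≠ (x:ℂ)} := by
  intro g
  induction g with
  | zero =>
    intro i hi1 him
    haveI : IsFiniteMeasure (σ i) := (hNik.2 i hi1 (by omega)).1
    have h := contOn_cauchy (σ i) (a i) (b i) (hNik.2 i hi1 (by omega)).2.1
      (fun _ => (1:ℂ)) aestronglyMeasurable_const 1 (fun x _ => by simp)
    have he : nikAux σ 0 i = fun z => ∫ x, (1:ℂ) / (z - (x:ℂ)) ∂(σ i) := by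
      funext z; simp [nikAux, cauchyT, one_div]
    rw [he]; exact h
  | succ g ih =>
    intro i hi1 him
    haveI : IsFiniteMeasure (σ i) := (hNik.2 i hi1 (by omega)).1
    have hdisj : Set.Icc (a i) (b i) ∩ Set.Icc (a (i+1)) (b (i+1)) = ∅ :=
      hNik.1.2 i hi1 (by omega)
    have hcont : ContinuousOn (fun x : ℝ => nikAux σ g (i+1) (x:ℂ)) (Set.Icc (a i) (b i)) := by
      refine (ih (i+1) (by omega) (by omega)).comp Complex.continuous_ofReal.continuousOn ?_
      intro x hx
      intro y hy hxy
      have hxEq : x = y := by exact_mod_cast hxy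
      subst hxEq
      exact absurd (Set.mem_inter hx hy) (by simp [hdisj])
    obtain ⟨M, hM⟩ := isCompact_Icc.exists_bound_of_continuousOn hcont
    exact contOn_cauchy (σ i) (a i) (b i) (hNik.2 i hi1 (by omega)).2.1 _
      (aesm_of_contOn (hNik.2 i hi1 (by omega)).2.1 hcont) M hM

lemma nikAux_conj (σ : ℕ → Measure ℝ) :
    ∀ g i z, (starRingEnd ℂ) (nikAux σ g i z) = nikAux σ g i ((starRingEnd ℂ) z) := by
  intro g
  induction g with
  | zero =>
    intro i z
    show (starRingEnd ℂ) (cauchyT (σ i) z) = cauchyT (σ i) _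
    rw [cauchyT, cauchyT, ← integral_conj]
    congr 1; funext x
    rw [map_inv₀, map_sub, Complex.conj_ofReal]
  | succ g ih =>
    intro i z
    show (starRingEnd ℂ) (∫ x, nikAux σ g (i+1) (x:ℂ) / (z - (x:ℂ)) ∂(σ i)) = _
    rw [← integral_conj]
    show _ = ∫ x, nikAux σ g (i+1) (x:ℂ) / ((starRingEnd ℂ) z - (x:ℂ)) ∂(σ i)
    congr 1; funext x
    rw [map_div₀, map_sub, Complex.conj_ofReal, ih]
    rw [Complex.conj_ofReal]

lemma nikAux_real (σ : ℕ → Measure ℝ) (g i : ℕ) (x : ℝ) :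
    nikAux σ g i (x:ℂ) = (((nikAux σ g i (x:ℂ)).re : ℝ) : ℂ) := by
  have h := nikAux_conj σ g i (x:ℂ)
  rw [Complex.conj_ofReal] at h
  exact (Complex.conj_eq_iff_re.1 h).symm

lemma sHat_self (σ : ℕ → Measure ℝ) (i : ℕ) : sHat σ i i = cauchyT (σ i) := by
  unfold sHat
  rw [if_pos (le_refl i), Nat.sub_self]
  rfl

lemma sHat_rec (σ : ℕ → Measure ℝ) (i k : ℕ) (h : i + 1 ≤ k) (z : ℂ) :
    sHat σ i k z = ∫ x, sHat σ (i+1) k (x:ℂ) / (z - (x:ℂ)) ∂(σ i) := by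
  have h1 : i ≤ k := by omega
  have h2 : k - i = (k - (i+1)) + 1 := by omega
  unfold sHat
  rw [if_pos h1, if_pos h, h2]
  rfl


def ddPoly (P : Polynomial ℝ) (c : ℕ → ℝ) : Polynomial ℝ :=
  ∑ i ∈ Finset.range (P.natDegree + 1), Polynomial.C (P.coeff i) *
    ∑ t ∈ Finset.range i, Polynomial.C (c (i - 1 - t)) * Polynomial.X ^ t

lemma ddPoly_natDegree_le (P : Polynomial ℝ) (c : ℕ → ℝ) :
    (ddPoly P c).natDegree ≤ P.natDegree - 1 := by
  apply Polynomial.natDegree_sum_le_of_forall_le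
  intro i hi
  apply (Polynomial.natDegree_C_mul_le _ _).trans
  apply Polynomial.natDegree_sum_le_of_forall_le
  intro t ht
  apply (Polynomial.natDegree_C_mul_le _ _).trans
  rw [Polynomial.natDegree_X_pow]
  rw [Finset.mem_range] at hi ht
  omega

lemma aeval_ddPoly (μ : Measure ℝ) [IsFiniteMeasure μ] {A B : ℝ}
    (hμ : μ (Set.Icc A B)ᶜ = 0)
    (P : Polynomial ℝ) (w : ℝ → ℂ) (hw : AEStronglyMeasurable w μ)
    {Mw : ℝ} (hMw : ∀ x ∈ Set.Icc A B, ‖w x‖ ≤ Mw)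
    (hre : ∀ x : ℝ, w x = (((w x).re : ℝ) : ℂ))
    {z : ℂ} (hz : ∀ x ∈ Set.Icc A B, z ≠ (x:ℂ)) :
    (Polynomial.aeval z (ddPoly P (fun q => ∫ x, x ^ q * (w x).re ∂μ)) : ℂ) =
      ∫ x, (Polynomial.aeval z P - Polynomial.aeval (x:ℂ) P) / (z - (x:ℂ)) * w x ∂μ := by
  set n := P.natDegree with hn
  -- integrability of monomial times weight
  have hxq : ∀ q : ℕ, Integrable (fun x : ℝ => (x:ℂ)^q * w x) μ := by
    intro q
    refine integrable_of_bound hμ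
      (((Complex.continuous_ofReal.pow q).aestronglyMeasurable).mul hw)
      (C := (max |A| |B|)^q * |Mw|) fun x hx => ?_
    rw [norm_mul]
    refine mul_le_mul ?_ ((hMw x hx).trans (le_abs_self _)) (norm_nonneg _) (by positivity)
    rw [norm_pow]
    simp only [Complex.norm_real, Real.norm_eq_abs]
    exact pow_le_pow_left₀ (abs_nonneg x) (abs_le_max_abs_abs hx.1 hx.2) q
  -- pointwise identity
  have hpt : ∀ x ∈ Set.Icc A B,
      (Polynomial.aeval z P - Polynomial.aeval (x:ℂ) P) / (z - (x:ℂ)) * w x =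
      ∑ i ∈ Finset.range (n+1), ∑ t ∈ Finset.range i,
        ((P.coeff i : ℂ) * z^t) * ((x:ℂ)^(i-1-t) * w x) := by
    intro x hx
    have hzx : z - (x:ℂ) ≠ 0 := sub_ne_zero.2 (hz x hx)
    have e1 : Polynomial.aeval z P - Polynomial.aeval ((x:ℂ)) P =
        (∑ i ∈ Finset.range (n+1), (P.coeff i) •
          ∑ t ∈ Finset.range i, z^t * ((x:ℂ))^(i-1-t)) * (z - (x:ℂ)) := by
      rw [Polynomial.aeval_eq_sum_range (R := ℝ) z, Polynomial.aeval_eq_sum_range (R := ℝ) ((x:ℂ)),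
        ← Finset.sum_sub_distrib, Finset.sum_mul]
      refine Finset.sum_congr rfl fun i _ => ?_
      rw [← smul_sub, ← geom_sum₂_mul z ((x:ℂ)) i, smul_mul_assoc]
    rw [e1, mul_div_cancel_right₀ _ hzx]
    simp only [Complex.real_smul, Finset.sum_mul, Finset.mul_sum]
    refine Finset.sum_congr rfl fun i _ => Finset.sum_congr rfl fun t _ => by ring
  rw [integral_congr_ae (g := fun x : ℝ => ∑ i ∈ Finset.range (n+1), ∑ t ∈ Finset.range i,
      ((P.coeff i : ℂ) * z^t) * ((x:ℂ)^(i-1-t) * w x))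
    (by filter_upwards [ae_mem hμ] with x hx using hpt x hx)]
  rw [integral_finset_sum _ (fun i _ => integrable_finset_sum _ (fun t _ => (hxq _).const_mul _))]
  have hmom : ∀ q : ℕ, (∫ x, (x:ℂ)^q * w x ∂μ) = ((∫ x, x^q * (w x).re ∂μ : ℝ) : ℂ) := by
    intro q
    rw [integral_congr_ae (g := fun x : ℝ => (((x^q * (w x).re : ℝ)) : ℂ))
      (Eventually.of_forall fun x => by rw [hre x]; push_cast; ring)]
    exact integral_ofReal
  rw [ddPoly]
  simp only [map_sum, map_mul, Polynomial.aeval_C, Polynomial.aeval_X, map_pow,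
    Complex.coe_algebraMap]
  refine Finset.sum_congr rfl fun i _ => ?_
  rw [integral_finset_sum _ (fun t _ => (hxq _).const_mul _), Finset.mul_sum]
  refine Finset.sum_congr rfl fun t _ => ?_
  rw [integral_const_mul, hmom]
  ring

lemma final_alg (K : Finset ℕ) (j : ℕ) (hK : ∀ k ∈ K, j + 2 ≤ k)
    (P1 C T0 : ℂ) (I P G T : ℕ → ℂ) (hI : ∀ k ∈ K, I k = P k * G k - T k) :
    (-1:ℂ)^(j+1) * (P1 * C - T0) + ∑ k ∈ K, (-1:ℂ)^k * I k =
    (-1:ℂ)^j * (T0 + ∑ k ∈ K, (-1:ℂ)^(k-j+1) * T k) +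
      ((-1:ℂ)^(j+1) * P1 * C + ∑ k ∈ K, (-1:ℂ)^k * P k * G k) := by
  have h1 : ∀ k ∈ K, (-1:ℂ)^k * I k =
      (-1:ℂ)^k * P k * G k + ((-1:ℂ)^j * ((-1:ℂ)^(k-j+1) * T k)) := by
    intro k hk
    have h2 : j + (k - j + 1) = k + 1 := by have := hK k hk; omega
    rw [hI k hk, ← mul_assoc ((-1:ℂ)^j), ← pow_add, h2, pow_succ]
    ring
  rw [Finset.sum_congr rfl h1, Finset.sum_add_distrib, mul_add, Finset.mul_sum]
  ring

end NikL

end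

/-- The inductive step in the proof of Lemma 2.1: the Cauchy transform of the form
`Ã_{j+1}` with respect to `σ_{j+1}` is again a form of the same type, with an
explicitly given polynomial `a_j` of degree at most `max deg a_k - 1`. -/
theorem form_cauchy_transform_expansion
    (m : ℕ) (hm : 2 ≤ m) (a b : ℕ → ℝ) (σ : ℕ → Measure ℝ)
    (hNik : NikishinData m a b σ)
    (j : ℕ) (hj : j ≤ m - 1) (aP : ℕ → Polynomial ℝ) :
    ∃ Pj : Polynomial ℝ,
      Pj.natDegree ≤ (Finset.Icc (j + 1) m).sup (fun k => (aP k).natDegree) - 1 ∧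
      (∀ z : ℂ, z ∉ cSeg m a b (j + 1) →
        Polynomial.aeval z Pj =
          (∫ x, (Polynomial.aeval z (aP (j + 1)) - Polynomial.aeval (x : ℂ) (aP (j + 1))) /
              (z - (x : ℂ)) ∂(σ (j + 1))) +
          ∑ k ∈ Finset.Icc (j + 2) m, (-1 : ℂ) ^ (k - j + 1) *
            ∫ x, (Polynomial.aeval z (aP k) - Polynomial.aeval (x : ℂ) (aP k)) /
              (z - (x : ℂ)) * sHat σ (j + 2) k (x : ℂ) ∂(σ (j + 1))) ∧
      (∀ z : ℂ, z ∉ cSeg m a b (j + 1) →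
        (∫ x, ((-1 : ℂ) ^ (j + 1) * Polynomial.aeval (x : ℂ) (aP (j + 1)) +
            ∑ k ∈ Finset.Icc (j + 2) m, (-1 : ℂ) ^ k * Polynomial.aeval (x : ℂ) (aP k) *
              sHat σ (j + 2) k (x : ℂ)) / (z - (x : ℂ)) ∂(σ (j + 1))) =
          (-1 : ℂ) ^ j * Polynomial.aeval z Pj +
            ∑ k ∈ Finset.Icc (j + 1) m, (-1 : ℂ) ^ k * Polynomial.aeval z (aP k) *
              sHat σ (j + 1) k z) := by
  classical
  obtain ⟨hInt, hMeas⟩ := hNik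
  have hjm : j + 1 ≤ m := by omega
  haveI hfin : IsFiniteMeasure (σ (j+1)) := (hMeas (j+1) (by omega) hjm).1
  have hsupp : σ (j+1) (Set.Icc (a (j+1)) (b (j+1)))ᶜ = 0 := (hMeas (j+1) (by omega) hjm).2.1
  have hwfacts : ∀ k ∈ Finset.Icc (j+2) m,
      AEStronglyMeasurable (fun x : ℝ => sHat σ (j+2) k (x:ℂ)) (σ (j+1)) ∧
      (∃ M, ∀ x ∈ Set.Icc (a (j+1)) (b (j+1)), ‖sHat σ (j+2) k (x:ℂ)‖ ≤ M) ∧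
      (∀ x : ℝ, sHat σ (j+2) k (x:ℂ) = (((sHat σ (j+2) k (x:ℂ)).re : ℝ) : ℂ)) := by
    intro k hk
    rw [Finset.mem_Icc] at hk
    have hsH : sHat σ (j+2) k = nikAux σ (k - (j+2)) (j+2) := by
      unfold sHat; rw [if_pos (by omega : j + 2 ≤ k)]
    have hdisj : Set.Icc (a (j+1)) (b (j+1)) ∩ Set.Icc (a (j+2)) (b (j+2)) = ∅ :=
      hInt.2 (j+1) (by omega) (by omega)
    have hcont : ContinuousOn (fun x : ℝ => sHat σ (j+2) k (x:ℂ))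
        (Set.Icc (a (j+1)) (b (j+1))) := by
      rw [hsH]
      refine (NikL.nikAux_contOn m a b σ ⟨hInt, hMeas⟩ (k - (j+2)) (j+2) (by omega)
        (by omega)).comp Complex.continuous_ofReal.continuousOn ?_
      intro x hx y hy hxy
      have hxEq : x = y := by exact_mod_cast hxy
      subst hxEq
      exact absurd (Set.mem_inter hx hy) (by simp [hdisj])
    refine ⟨NikL.aesm_of_contOn hsupp hcont,
      isCompact_Icc.exists_bound_of_continuousOn hcont, fun x => ?_⟩
    rw [hsH]; exact NikL.nikAux_real σ _ _ x
  set Pj : Polynomial ℝ :=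
    NikL.ddPoly (aP (j+1)) (fun q => ∫ x, x ^ q * ((1:ℂ)).re ∂(σ (j+1))) +
      ∑ k ∈ Finset.Icc (j+2) m, Polynomial.C ((-1:ℝ)^(k-j+1)) *
        NikL.ddPoly (aP k) (fun q => ∫ x, x ^ q * (sHat σ (j+2) k (x:ℂ)).re ∂(σ (j+1)))
    with hPj
  have hzIcc : ∀ z : ℂ, z ∉ cSeg m a b (j+1) →
      ∀ x ∈ Set.Icc (a (j+1)) (b (j+1)), z ≠ (x:ℂ) := by
    intro z hz x hx h
    apply hz
    rw [cSeg, if_pos ⟨by omega, hjm⟩]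
    refine ⟨by rw [h]; simp, by rw [h]; simpa using hx.1, by rw [h]; simpa using hx.2⟩
  have hdeg : Pj.natDegree ≤ (Finset.Icc (j + 1) m).sup (fun k => (aP k).natDegree) - 1 := by
    rw [hPj]
    apply (Polynomial.natDegree_add_le _ _).trans
    apply max_le
    · exact (NikL.ddPoly_natDegree_le _ _).trans
        (Nat.sub_le_sub_right (Finset.le_sup (f := fun k => (aP k).natDegree)
          (Finset.mem_Icc.2 ⟨le_refl _, hjm⟩)) 1)
    · apply Polynomial.natDegree_sum_le_of_forall_le
      intro k hk
      apply (Polynomial.natDegree_C_mul_le _ _).trans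
      apply (NikL.ddPoly_natDegree_le _ _).trans
      apply Nat.sub_le_sub_right
      apply Finset.le_sup (f := fun k => (aP k).natDegree)
      rw [Finset.mem_Icc] at hk ⊢; omega
  have hP2 : ∀ z : ℂ, z ∉ cSeg m a b (j + 1) →
      Polynomial.aeval z Pj =
        (∫ x, (Polynomial.aeval z (aP (j + 1)) - Polynomial.aeval (x : ℂ) (aP (j + 1))) /
            (z - (x : ℂ)) ∂(σ (j + 1))) +
        ∑ k ∈ Finset.Icc (j + 2) m, (-1 : ℂ) ^ (k - j + 1) *
          ∫ x, (Polynomial.aeval z (aP k) - Polynomial.aeval (x : ℂ) (aP k)) /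
            (z - (x : ℂ)) * sHat σ (j + 2) k (x : ℂ) ∂(σ (j + 1)) := by
    intro z hz
    have hzI := hzIcc z hz
    rw [hPj, map_add, map_sum]
    congr 1
    · have e1 := NikL.aeval_ddPoly (σ (j+1)) hsupp (aP (j+1)) (fun _ => (1:ℂ))
        aestronglyMeasurable_const (Mw := 1) (fun x _ => by simp) (fun x => by norm_num) hzI
      beta_reduce at e1
      rw [e1]
      exact integral_congr_ae (Eventually.of_forall fun x => by simp)
    · refine Finset.sum_congr rfl fun k hk => ?_
      obtain ⟨hwm, ⟨M, hM⟩, hwre⟩ := hwfacts k hk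
      have e2 := NikL.aeval_ddPoly (σ (j+1)) hsupp (aP k)
        (fun x : ℝ => sHat σ (j+2) k (x:ℂ)) hwm (Mw := M) hM hwre hzI
      beta_reduce at e2
      rw [map_mul, Polynomial.aeval_C, e2]
      norm_num
  have hP3 : ∀ z : ℂ, z ∉ cSeg m a b (j + 1) →
      (∫ x, ((-1 : ℂ) ^ (j + 1) * Polynomial.aeval (x : ℂ) (aP (j + 1)) +
          ∑ k ∈ Finset.Icc (j + 2) m, (-1 : ℂ) ^ k * Polynomial.aeval (x : ℂ) (aP k) *
            sHat σ (j + 2) k (x : ℂ)) / (z - (x : ℂ)) ∂(σ (j + 1))) =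
        (-1 : ℂ) ^ j * Polynomial.aeval z Pj +
          ∑ k ∈ Finset.Icc (j + 1) m, (-1 : ℂ) ^ k * Polynomial.aeval z (aP k) *
            sHat σ (j + 1) k z := by
    intro z hz
    have hzI := hzIcc z hz
    have hdiv : ∀ f : ℝ → ℂ, AEStronglyMeasurable f (σ (j+1)) →
        (∃ C, ∀ x ∈ Set.Icc (a (j+1)) (b (j+1)), ‖f x‖ ≤ C) →
        Integrable (fun x => f x / (z - (x:ℂ))) (σ (j+1)) := by
      rintro f hf ⟨C, hC⟩; exact NikL.integrable_div_of_bound hsupp hf hC hzI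
    have hcontP : ∀ Q : Polynomial ℝ, Continuous (fun x : ℝ => (Polynomial.aeval (x:ℂ) Q)) :=
      fun Q => Q.continuous_aeval.comp Complex.continuous_ofReal
    have hPbd : ∀ Q : Polynomial ℝ, ∃ C, ∀ x ∈ Set.Icc (a (j+1)) (b (j+1)),
        ‖Polynomial.aeval (x:ℂ) Q‖ ≤ C :=
      fun Q => isCompact_Icc.exists_bound_of_continuousOn (hcontP Q).continuousOn
    have hI1 : Integrable (fun x : ℝ => Polynomial.aeval (x:ℂ) (aP (j+1)) / (z - (x:ℂ)))
        (σ (j+1)) := hdiv _ (hcontP _).aestronglyMeasurable (hPbd _)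
    have hIw : ∀ k ∈ Finset.Icc (j+2) m,
        Integrable (fun x : ℝ =>
          Polynomial.aeval (x:ℂ) (aP k) * sHat σ (j+2) k (x:ℂ) / (z - (x:ℂ))) (σ (j+1)) := by
      intro k hk
      obtain ⟨hwm, ⟨M, hM⟩, _⟩ := hwfacts k hk
      obtain ⟨C, hC⟩ := hPbd (aP k)
      refine hdiv _ ((hcontP _).aestronglyMeasurable.mul hwm) ⟨|C| * |M|, fun x hx => ?_⟩
      rw [norm_mul]
      exact mul_le_mul ((hC x hx).trans (le_abs_self _)) ((hM x hx).trans (le_abs_self _))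
        (norm_nonneg _) (abs_nonneg _)
    have hIconst : Integrable (fun x : ℝ => (z - (x:ℂ))⁻¹) (σ (j+1)) := by
      have h := hdiv (fun _ => (1:ℂ)) aestronglyMeasurable_const ⟨1, fun x _ => by simp⟩
      simpa [one_div] using h
    have hId : ∀ Q : Polynomial ℝ, Integrable (fun x : ℝ =>
        (Polynomial.aeval z Q - Polynomial.aeval (x:ℂ) Q) / (z - (x:ℂ))) (σ (j+1)) := by
      intro Q
      obtain ⟨C, hC⟩ := hPbd Q
      refine hdiv _ (aestronglyMeasurable_const.sub (hcontP _).aestronglyMeasurable)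
        ⟨‖Polynomial.aeval z Q‖ + C, fun x hx => ?_⟩
      exact (norm_sub_le _ _).trans (add_le_add_right (hC x hx) _)
    have hIdk : ∀ k ∈ Finset.Icc (j+2) m, Integrable (fun x : ℝ =>
        (Polynomial.aeval z (aP k) - Polynomial.aeval (x:ℂ) (aP k)) / (z - (x:ℂ)) *
          sHat σ (j+2) k (x:ℂ)) (σ (j+1)) := by
      intro k hk
      obtain ⟨hwm, ⟨M, hM⟩, _⟩ := hwfacts k hk
      obtain ⟨C, hC⟩ := hPbd (aP k)
      have h := hdiv (fun x : ℝ => (Polynomial.aeval z (aP k) - Polynomial.aeval (x:ℂ) (aP k)) *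
          sHat σ (j+2) k (x:ℂ))
        ((aestronglyMeasurable_const.sub (hcontP _).aestronglyMeasurable).mul hwm)
        ⟨(‖Polynomial.aeval z (aP k)‖ + |C|) * |M|, fun x hx => ?_⟩
      · simpa [div_mul_eq_mul_div] using h
      · rw [norm_mul]
        exact mul_le_mul ((norm_sub_le _ _).trans
            (add_le_add_right ((hC x hx).trans (le_abs_self C)) _))
          ((hM x hx).trans (le_abs_self _)) (norm_nonneg _) (by positivity)
    have hsplit : (∫ x, ((-1 : ℂ) ^ (j + 1) * Polynomial.aeval (x : ℂ) (aP (j + 1)) +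
          ∑ k ∈ Finset.Icc (j + 2) m, (-1 : ℂ) ^ k * Polynomial.aeval (x : ℂ) (aP k) *
            sHat σ (j + 2) k (x : ℂ)) / (z - (x : ℂ)) ∂(σ (j + 1))) =
        (-1 : ℂ) ^ (j+1) * ∫ x, Polynomial.aeval (x:ℂ) (aP (j+1)) / (z - (x:ℂ)) ∂(σ (j+1)) +
        ∑ k ∈ Finset.Icc (j+2) m, (-1 : ℂ) ^ k *
          ∫ x, Polynomial.aeval (x:ℂ) (aP k) * sHat σ (j+2) k (x:ℂ) / (z - (x:ℂ))
            ∂(σ (j+1)) := by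
      rw [integral_congr_ae (g := fun x : ℝ =>
        (-1 : ℂ) ^ (j+1) * (Polynomial.aeval (x:ℂ) (aP (j+1)) / (z - (x:ℂ))) +
        ∑ k ∈ Finset.Icc (j+2) m, (-1 : ℂ) ^ k *
          (Polynomial.aeval (x:ℂ) (aP k) * sHat σ (j+2) k (x:ℂ) / (z - (x:ℂ))))
        (Eventually.of_forall fun x => ?_)]
      · rw [integral_add ((hI1.const_mul _))
          (integrable_finset_sum _ fun k hk => (hIw k hk).const_mul _),
          integral_finset_sum _ (fun k hk => (hIw k hk).const_mul _), integral_const_mul]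
        simp only [integral_const_mul]
      · rw [add_div, Finset.sum_div]
        congr 1
        · ring
        · exact Finset.sum_congr rfl fun k _ => by ring
    have hmain1 : ∫ x, Polynomial.aeval (x:ℂ) (aP (j+1)) / (z - (x:ℂ)) ∂(σ (j+1)) =
        Polynomial.aeval z (aP (j+1)) * cauchyT (σ (j+1)) z -
          ∫ x, (Polynomial.aeval z (aP (j + 1)) - Polynomial.aeval (x : ℂ) (aP (j + 1))) /
            (z - (x : ℂ)) ∂(σ (j + 1)) := by
      rw [cauchyT, ← integral_const_mul,
        ← integral_sub (hIconst.const_mul _) (hId (aP (j+1)))]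
      refine integral_congr_ae ?_
      filter_upwards [NikL.ae_mem hsupp] with x hx
      have hne : z - (x:ℂ) ≠ 0 := sub_ne_zero.2 (hzI x hx)
      field_simp
      ring
    have hmaink : ∀ k ∈ Finset.Icc (j+2) m,
        ∫ x, Polynomial.aeval (x:ℂ) (aP k) * sHat σ (j+2) k (x:ℂ) / (z - (x:ℂ)) ∂(σ (j+1)) =
        Polynomial.aeval z (aP k) * sHat σ (j+1) k z -
          ∫ x, (Polynomial.aeval z (aP k) - Polynomial.aeval (x : ℂ) (aP k)) /
            (z - (x : ℂ)) * sHat σ (j + 2) k (x : ℂ) ∂(σ (j + 1)) := by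
      intro k hk
      rw [Finset.mem_Icc] at hk
      obtain ⟨hwm, ⟨M, hM⟩, _⟩ := hwfacts k (Finset.mem_Icc.2 hk)
      rw [NikL.sHat_rec σ (j+1) k (by omega) z, ← integral_const_mul,
        ← integral_sub ((hdiv _ hwm ⟨M, hM⟩).const_mul _) (hIdk k (Finset.mem_Icc.2 hk))]
      refine integral_congr_ae ?_
      filter_upwards [NikL.ae_mem hsupp] with x hx
      have hne : z - (x:ℂ) ≠ 0 := sub_ne_zero.2 (hzI x hx)
      field_simp
      ring
    have hins : Finset.Icc (j+1) m = insert (j+1) (Finset.Icc (j+2) m) := by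
      ext r; simp only [Finset.mem_Icc, Finset.mem_insert]; omega
    rw [hsplit, hmain1, hP2 z hz, hins, Finset.sum_insert (by simp [Finset.mem_Icc])]
    rw [show sHat σ (j+1) (j+1) z = cauchyT (σ (j+1)) z from by rw [NikL.sHat_self]]
    exact NikL.final_alg (Finset.Icc (j+2) m) j (fun k hk => (Finset.mem_Icc.1 hk).1)
      (Polynomial.aeval z (aP (j+1))) (cauchyT (σ (j+1)) z) _ _
      (fun k => Polynomial.aeval z (aP k)) (fun k => sHat σ (j+1) k z)
      (fun k => ∫ x, (Polynomial.aeval z (aP k) - Polynomial.aeval (x : ℂ) (aP k)) /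
        (z - (x : ℂ)) * sHat σ (j + 2) k (x : ℂ) ∂(σ (j + 1))) hmaink
  exact ⟨Pj, hdeg, hP2, hP3⟩
end
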